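/- arXiv:1904.05579 — 3 statements merged into one kernel-verified Lean document; each statement's English description precedes it below -/
import Mathlib

section
/- If W is a Γ-graded irreducible gl_N-module with dim W > 1, then for every α ∈ ℂ^d and β ∈ ℂ the g-module V(α,β,W) is irreducible (it is nonzero and has no g-submodules other than 0 and itself). -/
open scoped BigOperators

noncomputable section

/-- The index `2i-1` (1-based), i.e. `2i` (0-based). -/
def p1 {d z : ℕ} (h : 2*z ≤ d) (i : Fin z) : Fin d := ⟨2*(i:ℕ), by have := i.2; omega⟩

/-- The index `2i` (1-based), i.e. `2i+1` (0-based). -/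
def p2 {d z : ℕ} (h : 2*z ≤ d) (i : Fin z) : Fin d := ⟨2*(i:ℕ)+1, by have := i.2; omega⟩

/-- `σ(m,n) = ∏_i q_i^{n_{2i} m_{2i-1}}`. -/
def qsigma {d z : ℕ} (h : 2*z ≤ d) (q : Fin z → ℂ) (m n : Fin d → ℤ) : ℂ :=
  ∏ i : Fin z, q i ^ (n (p2 h i) * m (p1 h i))

/-- The subgroup `R = ⊕ (ℤ k_i e_{2i-1} ⊕ ℤ k_i e_{2i}) ⊕ ⊕_{l > 2z} ℤ e_l` of `ℤ^d`. -/
def Rgrp {d z : ℕ} (h : 2*z ≤ d) (k : Fin z → ℕ) : AddSubgroup (Fin d → ℤ) where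
  carrier := {m | ∀ i : Fin z, ((k i : ℤ) ∣ m (p1 h i)) ∧ ((k i : ℤ) ∣ m (p2 h i))}
  zero_mem' := fun i => ⟨dvd_zero _, dvd_zero _⟩
  add_mem' := fun ha hb i => ⟨dvd_add (ha i).1 (hb i).1, dvd_add (ha i).2 (hb i).2⟩
  neg_mem' := fun ha i => ⟨dvd_neg.mpr (ha i).1, dvd_neg.mpr (ha i).2⟩

/-- Membership in the set `Γ₀` of distinguished coset representatives for `ℤ^d/R`. -/
def inGamma0 {d z : ℕ} (h : 2*z ≤ d) (k : Fin z → ℕ) (n : Fin d → ℤ) : Prop :=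
  (∀ i : Fin z, 0 ≤ n (p1 h i) ∧ n (p1 h i) < k i ∧ 0 ≤ n (p2 h i) ∧ n (p2 h i) < k i) ∧
  ∀ l : Fin d, 2*z ≤ (l:ℕ) → n l = 0

/-- The representative in `Γ₀` of the coset `n + R`. -/
def repZ {d z : ℕ} (h : 2*z ≤ d) (k : Fin z → ℕ) (n : Fin d → ℤ) : Fin d → ℤ :=
  fun l => if hl : (l:ℕ) < 2*z then n l % (k ⟨(l:ℕ)/2, by omega⟩ : ℤ) else 0

/-- `(γ|m) = ∑ γ_i m_i`. -/
def ginner {d : ℕ} (γ : Fin d → ℂ) (m : Fin d → ℤ) : ℂ := ∑ i, γ i * (m i : ℂ)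

/-- The matrix `X^n = ⊗_i X_{2i-1}^{n_{2i-1}} X_{2i}^{n_{2i}} ∈ gl_N`, realized on the
index set `∏_i Fin (k_i)` (of cardinality `N = k_1 ⋯ k_z`). -/
def Xmat {d z : ℕ} (h : 2*z ≤ d) (k : Fin z → ℕ) (q : Fin z → ℂ) (n : Fin d → ℤ) :
    Matrix ((i : Fin z) → Fin (k i)) ((i : Fin z) → Fin (k i)) ℂ :=
  Matrix.of fun j l => ∏ i : Fin z,
    (q i ^ (n (p1 h i) * (j i : ℤ)) *
      (if (l i : ℤ) = ((j i : ℤ) + n (p2 h i)) % (k i) then 1 else 0))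

lemma repZ_mem {d z : ℕ} (h : 2*z ≤ d) (k : Fin z → ℕ) (hk : ∀ i, 0 < k i)
    (n : Fin d → ℤ) : inGamma0 h k (repZ h k n) := by
  constructor
  · intro i
    have h1 : ((p1 h i : ℕ)) < 2*z := by simp only [p1]; have := i.2; omega
    have h2 : ((p2 h i : ℕ)) < 2*z := by simp only [p2]; have := i.2; omega
    have e1 : (⟨((p1 h i : ℕ))/2, by omega⟩ : Fin z) = i := by
      apply Fin.ext; simp only [p1]; omega
    have e2 : (⟨((p2 h i : ℕ))/2, by omega⟩ : Fin z) = i := by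
      apply Fin.ext; simp only [p2]; omega
    have hk' : (0:ℤ) < (k i : ℤ) := by exact_mod_cast hk i
    refine ⟨?_, ?_, ?_, ?_⟩ <;> simp only [repZ, dif_pos h1, dif_pos h2, e1, e2]
    · exact Int.emod_nonneg _ (by exact_mod_cast (hk i).ne')
    · exact Int.emod_lt_of_pos _ hk'
    · exact Int.emod_nonneg _ (by exact_mod_cast (hk i).ne')
    · exact Int.emod_lt_of_pos _ hk'
  · intro l hl
    simp only [repZ, dif_neg (by omega : ¬ (l:ℕ) < 2*z)]

/-- A family of operators is a weight module with uniformly bounded finite-dimensional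
weight spaces (cuspidality), with respect to the Cartan operator `L0`. -/
def IsCuspidalFor {M : Type*} [AddCommGroup M] [Module ℂ M] (L0 : Module.End ℂ M) : Prop :=
  ((⨆ c : ℂ, Module.End.eigenspace L0 c) = ⊤) ∧
  (∀ c : ℂ, FiniteDimensional ℂ (Module.End.eigenspace L0 c)) ∧
  ∃ B : ℕ, ∀ c : ℂ, Module.finrank ℂ (Module.End.eigenspace L0 c) ≤ B

/-- The defining bracket relations of the solenoidal Lie algebra `g` over the rational
quantum torus, for a family of operators `L` (i.e. `M` is a `g`-module). -/
def GRel {d z : ℕ} (h : 2*z ≤ d) (k : Fin z → ℕ) (q : Fin z → ℂ) (γ : Fin d → ℂ)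
    {M : Type*} [AddCommGroup M] [Module ℂ M] (L : (Fin d → ℤ) → Module.End ℂ M) : Prop :=
  (∀ m n, m ∈ Rgrp h k → n ∈ Rgrp h k → ⁅L m, L n⁆ = (ginner γ (n - m)) • L (m + n)) ∧
  (∀ m s, m ∈ Rgrp h k → s ∉ Rgrp h k → ⁅L m, L s⁆ = (ginner γ s) • L (m + s)) ∧
  (∀ r s, r ∉ Rgrp h k → s ∉ Rgrp h k →
    ⁅L r, L s⁆ = (qsigma h q r s - qsigma h q s r) • L (r + s))

/-- The relations making `(L, T)` a `Zg`-module structure: `Z` acts associatively and the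
semidirect-product brackets `[L_m, t^n] = (γ|n) t^{m+n}`, `[L_r, t^n] = 0` hold. -/
def ZRel {d z : ℕ} (h : 2*z ≤ d) (k : Fin z → ℕ) (γ : Fin d → ℂ)
    {M : Type*} [AddCommGroup M] [Module ℂ M] (L T : (Fin d → ℤ) → Module.End ℂ M) : Prop :=
  (∀ m n, m ∈ Rgrp h k → n ∈ Rgrp h k → T m * T n = T (m + n)) ∧
  (T 0 = 1) ∧
  (∀ m n, m ∈ Rgrp h k → n ∈ Rgrp h k → ⁅L m, T n⁆ = (ginner γ n) • T (m + n)) ∧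
  (∀ r n, r ∉ Rgrp h k → n ∈ Rgrp h k → ⁅L r, T n⁆ = 0)

attribute [local instance 100] LieRing.ofAssociativeRing

section AuxArith

variable {d z : ℕ} (h : 2*z ≤ d) (k : Fin z → ℕ)

lemma p1_lt (i : Fin z) : ((p1 h i : ℕ)) < 2*z := by simp only [p1]; have := i.2; omega

lemma p2_lt (i : Fin z) : ((p2 h i : ℕ)) < 2*z := by simp only [p2]; have := i.2; omega

lemma p1_half (i : Fin z) : (⟨((p1 h i : ℕ))/2, by have := p1_lt h i; omega⟩ : Fin z) = i := by
  apply Fin.ext; simp only [p1]; omega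

lemma p2_half (i : Fin z) : (⟨((p2 h i : ℕ))/2, by have := p2_lt h i; omega⟩ : Fin z) = i := by
  apply Fin.ext; simp only [p2]; omega

lemma mem_Rgrp {m : Fin d → ℤ} :
    m ∈ Rgrp h k ↔ ∀ i : Fin z, ((k i : ℤ) ∣ m (p1 h i)) ∧ ((k i : ℤ) ∣ m (p2 h i)) :=
  Iff.rfl

lemma idx_cases (l : Fin d) (hl : (l:ℕ) < 2*z) :
    (∃ i : Fin z, l = p1 h i) ∨ (∃ i : Fin z, l = p2 h i) := by
  rcases Nat.even_or_odd (l:ℕ) with ⟨t, ht⟩ | ⟨t, ht⟩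
  · exact Or.inl ⟨⟨(l:ℕ)/2, by omega⟩, by apply Fin.ext; simp only [p1]; omega⟩
  · exact Or.inr ⟨⟨(l:ℕ)/2, by omega⟩, by apply Fin.ext; simp only [p2]; omega⟩

lemma repZ_p1 (n : Fin d → ℤ) (i : Fin z) :
    repZ h k n (p1 h i) = n (p1 h i) % (k i : ℤ) := by
  simp only [repZ, dif_pos (p1_lt h i)]
  rw [p1_half h i]

lemma repZ_p2 (n : Fin d → ℤ) (i : Fin z) :
    repZ h k n (p2 h i) = n (p2 h i) % (k i : ℤ) := by
  simp only [repZ, dif_pos (p2_lt h i)]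
  rw [p2_half h i]

lemma repZ_tail (n : Fin d → ℤ) (l : Fin d) (hl : 2*z ≤ (l:ℕ)) : repZ h k n l = 0 := by
  simp only [repZ, dif_neg (by omega : ¬ (l:ℕ) < 2*z)]

lemma sub_repZ_mem (n : Fin d → ℤ) : n - repZ h k n ∈ Rgrp h k := by
  intro i
  constructor
  · simp only [Pi.sub_apply, repZ_p1 h k n i]
    exact ⟨n (p1 h i) / (k i : ℤ), by rw [Int.emod_def]; ring⟩
  · simp only [Pi.sub_apply, repZ_p2 h k n i]
    exact ⟨n (p2 h i) / (k i : ℤ), by rw [Int.emod_def]; ring⟩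

lemma repZ_eq_of_sub_mem {u u' : Fin d → ℤ} (hm : u - u' ∈ Rgrp h k) :
    repZ h k u = repZ h k u' := by
  funext l
  by_cases hl : (l:ℕ) < 2*z
  · have key : ∀ i : Fin z, l = p1 h i ∨ l = p2 h i →
        u l % (k i : ℤ) = u' l % (k i : ℤ) := by
      intro i hi
      have hdvd : (k i : ℤ) ∣ u l - u' l := by
        rcases hi with hi | hi
        · have := (hm i).1; subst hi; simpa using this
        · have := (hm i).2; subst hi; simpa using this
      have hme : u l ≡ u' l [ZMOD ((k i : ℕ) : ℤ)] :=
        Int.modEq_iff_dvd.mpr (by simpa [neg_sub] using dvd_neg.mpr hdvd)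
      exact hme
    rcases idx_cases h l hl with ⟨i, hi⟩ | ⟨i, hi⟩
    · have e1 : (⟨(l:ℕ)/2, by omega⟩ : Fin z) = i := by subst hi; exact p1_half h i
      simp only [repZ, dif_pos hl, e1]
      exact key i (Or.inl hi)
    · have e2 : (⟨(l:ℕ)/2, by omega⟩ : Fin z) = i := by subst hi; exact p2_half h i
      simp only [repZ, dif_pos hl, e2]
      exact key i (Or.inr hi)
  · simp only [repZ, dif_neg hl]

end AuxArith
section AuxArith2

variable {d z : ℕ} (h : 2*z ≤ d) (k : Fin z → ℕ)

lemma repZ_eq_self_of_inGamma0 {n : Fin d → ℤ} (hn : inGamma0 h k n) :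
    repZ h k n = n := by
  funext l
  by_cases hl : (l:ℕ) < 2*z
  · rcases idx_cases h l hl with ⟨i, hi⟩ | ⟨i, hi⟩
    · subst hi; rw [repZ_p1 h k n i]
      exact Int.emod_eq_of_lt ((hn.1 i).1) (by exact_mod_cast (hn.1 i).2.1)
    · subst hi; rw [repZ_p2 h k n i]
      exact Int.emod_eq_of_lt ((hn.1 i).2.2.1) (by exact_mod_cast (hn.1 i).2.2.2)
  · rw [repZ_tail h k n l (by omega)]
    exact (hn.2 l (by omega)).symm

lemma eq_zero_of_inGamma0_of_mem {n : Fin d → ℤ} (hn : inGamma0 h k n)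
    (hm : n ∈ Rgrp h k) : n = 0 := by
  funext l
  by_cases hl : (l:ℕ) < 2*z
  · rcases idx_cases h l hl with ⟨i, hi⟩ | ⟨i, hi⟩
    · subst hi
      have h1 : n (p1 h i) % (k i : ℤ) = n (p1 h i) :=
        Int.emod_eq_of_lt ((hn.1 i).1) (by exact_mod_cast (hn.1 i).2.1)
      have h2 : n (p1 h i) % (k i : ℤ) = 0 := Int.emod_eq_zero_of_dvd ((hm i).1)
      simpa [h2] using h1.symm
    · subst hi
      have h1 : n (p2 h i) % (k i : ℤ) = n (p2 h i) :=
        Int.emod_eq_of_lt ((hn.1 i).2.2.1) (by exact_mod_cast (hn.1 i).2.2.2)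
      have h2 : n (p2 h i) % (k i : ℤ) = 0 := Int.emod_eq_zero_of_dvd ((hm i).2)
      simpa [h2] using h1.symm
  · exact hn.2 l (by omega)

lemma repZ_zero : repZ h k (0 : Fin d → ℤ) = 0 := by
  funext l
  by_cases hl : (l:ℕ) < 2*z
  · simp only [repZ, dif_pos hl, Pi.zero_apply, Int.zero_emod]
  · simp only [repZ, dif_neg hl, Pi.zero_apply]

lemma sub_mem_of_repZ_eq {u u' : Fin d → ℤ} (he : repZ h k u = repZ h k u') :
    u - u' ∈ Rgrp h k := by
  have h1 := sub_repZ_mem h k u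
  have h2 := sub_repZ_mem h k u'
  have : u - u' = (u - repZ h k u) - (u' - repZ h k u') := by rw [he]; ring
  rw [this]
  exact sub_mem h1 h2

lemma mem_Rgrp_iff_repZ_eq_zero {u : Fin d → ℤ} :
    u ∈ Rgrp h k ↔ repZ h k u = 0 := by
  constructor
  · intro hu
    have : u - 0 ∈ Rgrp h k := by simpa using hu
    rw [repZ_eq_of_sub_mem h k this, repZ_zero]
  · intro hz
    have := sub_repZ_mem h k u
    rw [hz] at this
    simpa using this

end AuxArith2
section AuxMat

variable {d z : ℕ} (h : 2*z ≤ d) (k : Fin z → ℕ) (q : Fin z → ℂ)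

lemma q_zpow_k_mul (hq : ∀ i, IsPrimitiveRoot (q i) (k i)) (i : Fin z) (t : ℤ) :
    q i ^ ((k i : ℤ) * t) = 1 := by
  rw [zpow_mul, zpow_natCast, (hq i).pow_eq_one, one_zpow]

lemma Xmat_add_right_mem (hk : ∀ i, 0 < k i) (hq : ∀ i, IsPrimitiveRoot (q i) (k i)) (r : Fin d → ℤ)
    {m : Fin d → ℤ} (hm : m ∈ Rgrp h k) :
    Xmat h k q (r + m) = Xmat h k q r := by
  ext j l
  simp only [Xmat, Matrix.of_apply]
  refine Finset.prod_congr rfl (fun i _ => ?_)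
  obtain ⟨t1, ht1⟩ := (hm i).1
  obtain ⟨t2, ht2⟩ := (hm i).2
  rw [Pi.add_apply, Pi.add_apply, ht1, ht2]
  congr 1
  · rw [add_mul, zpow_add₀ ((hq i).ne_zero (hk i).ne'), mul_assoc, q_zpow_k_mul k q hq i, mul_one]
  · have : (j i : ℤ) + (r (p2 h i) + (k i : ℤ) * t2)
        = ((j i : ℤ) + r (p2 h i)) + (k i : ℤ) * t2 := by ring
    rw [this, Int.add_mul_emod_self_left]

lemma Xmat_zero : Xmat h k q 0 = 1 := by
  ext j l
  simp only [Xmat, Matrix.of_apply, Pi.zero_apply, zero_mul, zpow_zero, add_zero, one_mul]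
  have hjl : ∀ i : Fin z, ((j i : ℤ) % (k i : ℤ)) = (j i : ℤ) :=
    fun i => Int.emod_eq_of_lt (by positivity) (by exact_mod_cast (j i).isLt)
  by_cases hc : j = l
  · subst hc
    rw [Matrix.one_apply_eq]
    refine Finset.prod_eq_one (fun i _ => ?_)
    rw [hjl i, if_pos rfl]
  · rw [Matrix.one_apply_ne (fun hh => hc hh)]
    obtain ⟨i, hi⟩ := Function.ne_iff.mp hc
    refine Finset.prod_eq_zero (Finset.mem_univ i) ?_
    rw [hjl i, if_neg]
    intro hcon
    exact hi (Fin.ext (by exact_mod_cast hcon)).symm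

lemma Xmat_mem_eq_one (hk : ∀ i, 0 < k i) (hq : ∀ i, IsPrimitiveRoot (q i) (k i))
    {m : Fin d → ℤ} (hm : m ∈ Rgrp h k) : Xmat h k q m = 1 := by
  have h0 := Xmat_add_right_mem h k q hk hq 0 hm
  rw [zero_add] at h0
  rw [h0, Xmat_zero]

lemma Xmat_eq_repZ (hk : ∀ i, 0 < k i) (hq : ∀ i, IsPrimitiveRoot (q i) (k i))
    (r : Fin d → ℤ) : Xmat h k q r = Xmat h k q (repZ h k r) := by
  conv_lhs => rw [show r = repZ h k r + (r - repZ h k r) by ring]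
  exact Xmat_add_right_mem h k q hk hq _ (sub_repZ_mem h k r)

lemma primroot_sum (hk : ∀ i, 0 < k i) (hq : ∀ i, IsPrimitiveRoot (q i) (k i))
    (i : Fin z) (t : ℤ) :
    ∑ a : Fin (k i), (q i) ^ ((a : ℤ) * t) = if (k i : ℤ) ∣ t then (k i : ℂ) else 0 := by
  have hx : ∀ a : Fin (k i), (q i) ^ ((a : ℤ) * t) = ((q i) ^ t) ^ (a : ℕ) := by
    intro a
    rw [mul_comm, zpow_mul, zpow_natCast]
  rw [Finset.sum_congr rfl (fun a _ => hx a)]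
  rw [Fin.sum_univ_eq_sum_range (fun n => ((q i) ^ t) ^ n)]
  by_cases hdvd : (k i : ℤ) ∣ t
  · have hx1 : (q i) ^ t = 1 := ((hq i).zpow_eq_one_iff_dvd t).mpr hdvd
    simp [hx1, if_pos hdvd]
  · have hx1 : (q i) ^ t ≠ 1 := fun hcon => hdvd (((hq i).zpow_eq_one_iff_dvd t).mp hcon)
    rw [geom_sum_eq hx1]
    have hxk : ((q i) ^ t) ^ (k i : ℕ) = 1 := by
      rw [← zpow_natCast ((q i)^t), ← zpow_mul, mul_comm, q_zpow_k_mul k q hq]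
    rw [hxk, if_neg hdvd, sub_self, zero_div]

end AuxMat
section AuxSpan

variable {d z : ℕ} (h : 2*z ≤ d) (k : Fin z → ℕ) (q : Fin z → ℂ)

/-- The Γ₀-vector with odd entries `a i` and even entries `e i`. -/
def nnvec (h : 2*z ≤ d) (a e : (i : Fin z) → ℤ) : Fin d → ℤ :=
  fun l => if hl : (l:ℕ) < 2*z then
    (if (l:ℕ) % 2 = 0 then a ⟨(l:ℕ)/2, by omega⟩ else e ⟨(l:ℕ)/2, by omega⟩) else 0

lemma nnvec_p1 (a e : (i : Fin z) → ℤ) (i : Fin z) : nnvec h a e (p1 h i) = a i := by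
  simp only [nnvec, dif_pos (p1_lt h i)]
  rw [if_pos (by simp only [p1]; omega)]
  congr 1
  exact p1_half h i

lemma nnvec_p2 (a e : (i : Fin z) → ℤ) (i : Fin z) : nnvec h a e (p2 h i) = e i := by
  simp only [nnvec, dif_pos (p2_lt h i)]
  rw [if_neg (by simp only [p2]; omega)]
  congr 1
  exact p2_half h i

lemma nnvec_tail (a e : (i : Fin z) → ℤ) (l : Fin d) (hl : 2*z ≤ (l:ℕ)) :
    nnvec h a e l = 0 := by
  simp only [nnvec, dif_neg (by omega : ¬ (l:ℕ) < 2*z)]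

lemma nnvec_inGamma0 (hk : ∀ i, 0 < k i) (a e : (i : Fin z) → ℤ)
    (ha : ∀ i, 0 ≤ a i ∧ a i < k i) (he : ∀ i, 0 ≤ e i ∧ e i < k i) :
    inGamma0 h k (nnvec h a e) := by
  constructor
  · intro i
    rw [nnvec_p1 h a e i, nnvec_p2 h a e i]
    exact ⟨(ha i).1, (ha i).2, (he i).1, (he i).2⟩
  · exact fun l hl => nnvec_tail h a e l hl

lemma Xmat_span (hk : ∀ i, 0 < k i) (hq : ∀ i, IsPrimitiveRoot (q i) (k i))
    (A : Matrix ((i : Fin z) → Fin (k i)) ((i : Fin z) → Fin (k i)) ℂ) :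
    A ∈ Submodule.span ℂ
      {B : Matrix ((i : Fin z) → Fin (k i)) ((i : Fin z) → Fin (k i)) ℂ |
        ∃ n, inGamma0 h k n ∧ B = Xmat h k q n} := by
  classical
  -- reduce to standard basis matrices
  have hstd : ∀ (j₀ l₀ : (i : Fin z) → Fin (k i)) (x : ℂ),
      Matrix.single j₀ l₀ x ∈ Submodule.span ℂ
        {B : Matrix ((i : Fin z) → Fin (k i)) ((i : Fin z) → Fin (k i)) ℂ |
          ∃ n, inGamma0 h k n ∧ B = Xmat h k q n} := by
    intro j₀ l₀ x
    set e : (i : Fin z) → ℤ := fun i => ((l₀ i : ℤ) - (j₀ i : ℤ)) % (k i : ℤ) with he_def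
    have he : ∀ i, 0 ≤ e i ∧ e i < k i := by
      intro i
      constructor
      · exact Int.emod_nonneg _ (by exact_mod_cast (hk i).ne')
      · exact Int.emod_lt_of_pos _ (by exact_mod_cast hk i)
    set N : ℂ := ∏ i : Fin z, (k i : ℂ) with hN_def
    have hN : N ≠ 0 := by
      rw [hN_def]
      exact Finset.prod_ne_zero_iff.mpr (fun i _ => by exact_mod_cast (hk i).ne')
    -- the candidate vectors
    set nn : ((i : Fin z) → Fin (k i)) → (Fin d → ℤ) :=
      fun a => nnvec h (fun i => ((a i : ℕ) : ℤ)) e with hnn_def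
    have hnnG : ∀ a, inGamma0 h k (nn a) := by
      intro a
      refine nnvec_inGamma0 h k hk _ _ (fun i => ⟨by positivity, by exact_mod_cast (a i).isLt⟩) he
    -- the main Fourier identity
    have key : ∑ a : ((i : Fin z) → Fin (k i)),
        (∏ i : Fin z, (q i) ^ (-((a i : ℕ) : ℤ) * ((j₀ i : ℕ) : ℤ))) • Xmat h k q (nn a)
        = N • Matrix.single j₀ l₀ (1:ℂ) := by
      ext j l
      have hRHS : (N • Matrix.single j₀ l₀ (1:ℂ)) j l
          = if j₀ = j ∧ l₀ = l then N else 0 := by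
        rw [Matrix.smul_apply]
        simp only [Matrix.single, Matrix.of_apply, smul_eq_mul, mul_ite, mul_one,
          mul_zero]
      rw [hRHS, Matrix.sum_apply]
      have hterm : ∀ a : ((i : Fin z) → Fin (k i)),
          ((∏ i : Fin z, (q i) ^ (-((a i : ℕ) : ℤ) * ((j₀ i : ℕ) : ℤ))) • Xmat h k q (nn a)) j l
          = ∏ i : Fin z, ((q i) ^ (((a i : ℕ) : ℤ) * (((j i : ℕ) : ℤ) - ((j₀ i : ℕ) : ℤ))) *
              (if ((l i : ℕ) : ℤ) = (((j i : ℕ) : ℤ) + e i) % (k i : ℤ) then 1 else 0)) := by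
        intro a
        rw [Matrix.smul_apply, smul_eq_mul]
        simp only [Xmat, Matrix.of_apply, hnn_def, nnvec_p1, nnvec_p2]
        rw [← Finset.prod_mul_distrib]
        refine Finset.prod_congr rfl (fun i _ => ?_)
        rw [← mul_assoc, ← zpow_add₀ ((hq i).ne_zero (hk i).ne')]
        congr 2
        ring
      rw [Finset.sum_congr rfl (fun a _ => hterm a)]
      rw [← Fintype.prod_sum (fun i (b : Fin (k i)) =>
        (q i) ^ (((b : ℕ) : ℤ) * (((j i : ℕ) : ℤ) - ((j₀ i : ℕ) : ℤ))) *
          (if ((l i : ℕ) : ℤ) = (((j i : ℕ) : ℤ) + e i) % (k i : ℤ) then 1 else 0))]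
      have hfac : ∀ i : Fin z, (∑ b : Fin (k i),
          (q i) ^ (((b : ℕ) : ℤ) * (((j i : ℕ) : ℤ) - ((j₀ i : ℕ) : ℤ))) *
            (if ((l i : ℕ) : ℤ) = (((j i : ℕ) : ℤ) + e i) % (k i : ℤ) then 1 else 0))
          = (if ((k i : ℕ) : ℤ) ∣ (((j i : ℕ) : ℤ) - ((j₀ i : ℕ) : ℤ)) then (k i : ℂ) else 0) *
            (if ((l i : ℕ) : ℤ) = (((j i : ℕ) : ℤ) + e i) % (k i : ℤ) then 1 else 0) := by
        intro i
        rw [← Finset.sum_mul, primroot_sum k q hk hq i _]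
      rw [Finset.prod_congr rfl (fun i _ => hfac i)]
      by_cases hj : j = j₀
      · subst hj
        have hT : ∀ i : Fin z,
            (if ((k i : ℕ) : ℤ) ∣ (((j i : ℕ) : ℤ) - ((j i : ℕ) : ℤ)) then (k i : ℂ) else 0)
            = (k i : ℂ) := by
          intro i
          rw [if_pos (by simp)]
        rw [Finset.prod_congr rfl (fun i (_ : i ∈ Finset.univ) => by rw [hT i])]
        rw [Finset.prod_mul_distrib]
        have hTcond : ∀ i : Fin z,
            ((((l i : ℕ) : ℤ) = (((j i : ℕ) : ℤ) + e i) % (k i : ℤ)) ↔ l i = l₀ i) := by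
          intro i
          have hme : ((j i : ℕ) : ℤ) + e i ≡ ((j i : ℕ) : ℤ) + (((l₀ i : ℕ) : ℤ) - ((j i:ℕ) : ℤ))
              [ZMOD ((k i : ℕ) : ℤ)] := by
            refine Int.ModEq.add_left _ ?_
            exact Int.emod_emod_of_dvd _ dvd_rfl
          have hmod : (((j i : ℕ) : ℤ) + e i) % (k i : ℤ) = ((l₀ i : ℕ) : ℤ) := by
            rw [hme]
            rw [show ((j i : ℕ) : ℤ) + (((l₀ i : ℕ) : ℤ) - ((j i:ℕ) : ℤ)) = ((l₀ i : ℕ) : ℤ)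
              by ring]
            exact Int.emod_eq_of_lt (by positivity) (by exact_mod_cast (l₀ i).isLt)
          rw [hmod]
          constructor
          · intro hcon; exact Fin.ext (by exact_mod_cast hcon)
          · intro hcon; rw [hcon]
        by_cases hl : l = l₀
        · subst hl
          have hprod1 : (∏ i : Fin z,
              (if ((l i : ℕ) : ℤ) = (((j i : ℕ) : ℤ) + e i) % (k i : ℤ) then (1:ℂ) else 0))
              = 1 :=
            Finset.prod_eq_one (fun i _ => by rw [if_pos ((hTcond i).mpr rfl)])
          rw [hprod1, mul_one, if_pos ⟨rfl, rfl⟩, hN_def]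
        · obtain ⟨i0, hi0⟩ := Function.ne_iff.mp hl
          have hz0 : (if ((l i0 : ℕ) : ℤ) = (((j i0 : ℕ) : ℤ) + e i0) % (k i0 : ℤ)
              then (1:ℂ) else 0) = 0 := by
            rw [if_neg (fun hcon => hi0 ((hTcond i0).mp hcon))]
          have hp0 : (∏ i : Fin z,
              (if ((l i : ℕ) : ℤ) = (((j i : ℕ) : ℤ) + e i) % (k i : ℤ) then (1:ℂ) else 0)) = 0 :=
            Finset.prod_eq_zero (Finset.mem_univ i0) hz0
          rw [hp0, mul_zero, if_neg (fun hcon => hl hcon.2.symm)]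
      · obtain ⟨i0, hi0⟩ := Function.ne_iff.mp hj
        have hnd : ¬ (((k i0 : ℕ) : ℤ) ∣ (((j i0 : ℕ) : ℤ) - ((j₀ i0 : ℕ) : ℤ))) := by
          intro hcon
          obtain ⟨t, ht⟩ := hcon
          have hb1 : ((j i0 : ℕ) : ℤ) < (k i0 : ℕ) := by exact_mod_cast (j i0).isLt
          have hb2 : ((j₀ i0 : ℕ) : ℤ) < (k i0 : ℕ) := by exact_mod_cast (j₀ i0).isLt
          have hb3 : (0:ℤ) ≤ ((j i0 : ℕ) : ℤ) := by positivity
          have hb4 : (0:ℤ) ≤ ((j₀ i0 : ℕ) : ℤ) := by positivity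
          have hkpos : (0:ℤ) < ((k i0 : ℕ) : ℤ) := by exact_mod_cast hk i0
          have ht0 : t = 0 := by nlinarith [ht]
          rw [ht0, mul_zero] at ht
          exact hi0 (Fin.ext (by omega))
        have hz0 : ((if ((k i0 : ℕ) : ℤ) ∣ (((j i0 : ℕ) : ℤ) - ((j₀ i0 : ℕ) : ℤ))
            then (k i0 : ℂ) else 0) *
            (if ((l i0 : ℕ) : ℤ) = (((j i0 : ℕ) : ℤ) + e i0) % (k i0 : ℤ) then 1 else 0)) = 0 := by
          rw [if_neg hnd, zero_mul]
        rw [Finset.prod_eq_zero (Finset.mem_univ i0) hz0,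
          if_neg (fun hcon => hj hcon.1.symm)]
    -- conclude membership
    have hmem : (N • Matrix.single j₀ l₀ (1:ℂ)) ∈ Submodule.span ℂ
        {B : Matrix ((i : Fin z) → Fin (k i)) ((i : Fin z) → Fin (k i)) ℂ |
          ∃ n, inGamma0 h k n ∧ B = Xmat h k q n} := by
      rw [← key]
      refine Submodule.sum_mem _ (fun a _ => Submodule.smul_mem _ _ ?_)
      exact Submodule.subset_span ⟨nn a, hnnG a, rfl⟩
    have := Submodule.smul_mem _ (x / N) hmem
    rw [smul_smul, div_mul_cancel₀ x hN, Matrix.smul_single, smul_eq_mul,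
      mul_one] at this
    exact this
  rw [Matrix.matrix_eq_sum_single A]
  exact Submodule.sum_mem _ (fun j _ => Submodule.sum_mem _ (fun l _ => hstd j l _))

end AuxSpan
section AuxGeneric

lemma eigen_extract {M : Type*} [AddCommGroup M] [Module ℂ M] (U : Submodule ℂ M)
    (T : Module.End ℂ M) (hT : ∀ v ∈ U, T v ∈ U) {ι : Type*} [DecidableEq ι] (e : ι → ℂ) :
    ∀ (F : Finset ι) (y : ι → M), (∀ u ∈ F, T (y u) = e u • y u) →
      (∀ u ∈ F, ∀ u' ∈ F, e u = e u' → u = u') →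
      (∑ u ∈ F, y u) ∈ U → ∀ u ∈ F, y u ∈ U := by
  intro F
  induction F using Finset.strongInduction with
  | _ F ih =>
    intro y hy hinj hsum u hu
    rcases Finset.eq_empty_or_nonempty F with hF | ⟨u₀, hu₀⟩
    · simp [hF] at hu
    · -- new sum over the erased set
      have herase : F.erase u₀ ⊂ F := Finset.erase_ssubset hu₀
      have hsum2 : (∑ v ∈ F.erase u₀, (e v - e u₀) • y v) ∈ U := by
        have h1 : T (∑ v ∈ F, y v) ∈ U := hT _ hsum
        have h2 : T (∑ v ∈ F, y v) = ∑ v ∈ F, e v • y v := by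
          rw [map_sum]
          exact Finset.sum_congr rfl (fun v hv => hy v hv)
        have h3 : (∑ v ∈ F, (e v - e u₀) • y v) ∈ U := by
          have : (∑ v ∈ F, (e v - e u₀) • y v)
              = (∑ v ∈ F, e v • y v) - e u₀ • (∑ v ∈ F, y v) := by
            rw [Finset.smul_sum, ← Finset.sum_sub_distrib]
            exact Finset.sum_congr rfl (fun v _ => by rw [sub_smul])
          rw [this, ← h2]
          exact Submodule.sub_mem _ h1 (Submodule.smul_mem _ _ hsum)
        have : (∑ v ∈ F, (e v - e u₀) • y v) = ∑ v ∈ F.erase u₀, (e v - e u₀) • y v := by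
          rw [← Finset.add_sum_erase F _ hu₀, sub_self, zero_smul, zero_add]
        rwa [this] at h3
      have hmem : ∀ v ∈ F.erase u₀, (e v - e u₀) • y v ∈ U := by
        refine ih _ herase _ (fun v hv => ?_) (fun v hv v' hv' hee => ?_) hsum2
        · rw [map_smul, hy v (Finset.mem_of_mem_erase hv), smul_comm]
        · exact hinj v (Finset.mem_of_mem_erase hv) v' (Finset.mem_of_mem_erase hv') hee
      have hyv : ∀ v ∈ F.erase u₀, y v ∈ U := by
        intro v hv
        have hne : e v - e u₀ ≠ 0 := by
          intro hcon
          exact (Finset.ne_of_mem_erase hv)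
            (hinj v (Finset.mem_of_mem_erase hv) u₀ hu₀ (sub_eq_zero.mp hcon))
        have := Submodule.smul_mem _ (e v - e u₀)⁻¹ (hmem v hv)
        rwa [smul_smul, inv_mul_cancel₀ hne, one_smul] at this
      by_cases huu : u = u₀
      · subst huu
        have : y u = (∑ v ∈ F, y v) - ∑ v ∈ F.erase u, y v := by
          rw [← Finset.add_sum_erase F _ hu, add_sub_cancel_right]
        rw [this]
        exact Submodule.sub_mem _ hsum (Submodule.sum_mem _ hyv)
      · exact hyv u (Finset.mem_erase.mpr ⟨huu, hu⟩)

lemma aeval_inj_of_linear_inj {M : Type*} [AddCommGroup M] [Module ℂ M]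
    (c : Module.End ℂ M)
    (hinj : ∀ t : ℂ, Function.Injective (c - t • (1 : Module.End ℂ M))) :
    ∀ (n : ℕ) (p : Polynomial ℂ), p.natDegree ≤ n → p ≠ 0 →
      Function.Injective (Polynomial.aeval c p) := by
  intro n
  induction n with
  | zero =>
    intro p hdeg hne
    have hp : p = Polynomial.C (p.coeff 0) := Polynomial.eq_C_of_natDegree_le_zero hdeg
    have ha : p.coeff 0 ≠ 0 := fun hcon => hne (by rw [hp, hcon, map_zero])
    rw [hp]
    intro x y hxy
    simp only [Polynomial.aeval_C, Module.algebraMap_end_apply] at hxy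
    exact smul_right_injective M ha hxy
  | succ n ihn =>
    intro p hdeg hne
    by_cases h0 : p.natDegree = 0
    · exact ihn p (by omega) hne
    · have hdeg' : p.degree ≠ 0 := fun hcon => h0 (Polynomial.natDegree_eq_zero_iff_degree_le_zero.mpr (le_of_eq hcon))
      obtain ⟨t, ht⟩ := IsAlgClosed.exists_root p hdeg'
      obtain ⟨p2, hp2⟩ := Polynomial.dvd_iff_isRoot.mpr ht
      have hX : (Polynomial.X - Polynomial.C t) ≠ 0 := Polynomial.X_sub_C_ne_zero t
      have hp2ne : p2 ≠ 0 := fun hcon => hne (by rw [hp2, hcon, mul_zero])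
      have hdeg2 : p2.natDegree ≤ n := by
        have := Polynomial.natDegree_mul hX hp2ne
        rw [← hp2, Polynomial.natDegree_X_sub_C] at this
        omega
      have key : (Polynomial.aeval c) p
          = (c - t • (1 : Module.End ℂ M)) * (Polynomial.aeval c) p2 := by
        rw [hp2, map_mul]
        congr 1
        rw [map_sub, Polynomial.aeval_X, Polynomial.aeval_C]
        ext v
        simp [Module.algebraMap_end_apply]
      rw [key]
      intro x y hxy
      exact ihn p2 hdeg2 hp2ne (hinj t (by simpa [Module.End.mul_apply] using hxy))

end AuxGeneric
lemma ginner_inj {d : ℕ} (γ : Fin d → ℂ) (hγ : LinearIndependent ℚ γ)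
    {u u' : Fin d → ℤ} (he : ∑ i, γ i * ((u i : ℤ) : ℂ) = ∑ i, γ i * ((u' i : ℤ) : ℂ)) :
    u = u' := by
  have h1 := Fintype.linearIndependent_iff.mp hγ (fun i => ((u i - u' i : ℤ) : ℚ))
  have h2 : ∑ i, ((u i - u' i : ℤ) : ℚ) • γ i = 0 := by
    have : ∀ i, ((u i - u' i : ℤ) : ℚ) • γ i = γ i * ((u i : ℤ) : ℂ) - γ i * ((u' i : ℤ) : ℂ) := by
      intro i
      rw [Rat.smul_def]
      push_cast
      ring
    rw [Finset.sum_congr rfl (fun i _ => this i), Finset.sum_sub_distrib, he, sub_self]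
  funext i
  have := h1 h2 i
  have : (u i - u' i : ℤ) = 0 := by exact_mod_cast this
  omega
/-- Lemma 3.1.  If `W` is a `Γ`-graded irreducible `gl_N`-module with
`dim W > 1`, then for every `α ∈ ℂ^d` and `β ∈ ℂ` the `g`-module of tensor fields
`V(α,β,W)` is irreducible.  Here `V(α,β,W)` is presented as a vector space `V` with
operators `L x` (the action of the basis `L_x` of `g`), together with the structure maps
`ι u : W → V` realizing `V = ⊕_{u ∈ ℤ^d} W_{ū} ⊗ t^u` with the tensor-field action. -/
theorem stmt1 (d z : ℕ) (hd : 0 < d) (hz : 0 < z) (h2z : 2*z ≤ d)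
    (k : Fin z → ℕ) (hk : ∀ i, 0 < k i)
    (q : Fin z → ℂ) (hq : ∀ i, IsPrimitiveRoot (q i) (k i))
    (hkdvd : ∀ (i : ℕ) (hi : i + 1 < z), k ⟨i+1, hi⟩ ∣ k ⟨i, by omega⟩)
    (γ : Fin d → ℂ) (hγ : LinearIndependent ℚ γ)
    (α : Fin d → ℂ) (β : ℂ)
    -- `W` is a `Γ`-graded `gl_N`-module ...
    (W : Type*) [AddCommGroup W] [Module ℂ W]
    (ρ : Matrix ((i : Fin z) → Fin (k i)) ((i : Fin z) → Fin (k i)) ℂ →ₗ⁅ℂ⁆ Module.End ℂ W)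
    (Wgr : (Fin d → ℤ) → Submodule ℂ W)
    (hWrep : ∀ u, Wgr u = Wgr (repZ h2z k u))
    (hWint : DirectSum.IsInternal (fun s : {s : Fin d → ℤ // inGamma0 h2z k s} => Wgr s.1))
    (hWgraded : ∀ r u, ∀ w ∈ Wgr u, ρ (Xmat h2z k q r) w ∈ Wgr (r + u))
    -- ... which is `Γ`-graded irreducible ...
    (hWne : Nontrivial W)
    (hWirr : ∀ S : Submodule ℂ W, (∀ a, ∀ w ∈ S, ρ a w ∈ S) →
      (S = ⨆ s : {s : Fin d → ℤ // inGamma0 h2z k s}, S ⊓ Wgr s.1) → S = ⊥ ∨ S = ⊤)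
    -- ... with `dim W > 1`
    (hdim : 1 < Module.rank ℂ W)
    -- `V` is the module of tensor fields `V(α,β,W)`
    (V : Type*) [AddCommGroup V] [Module ℂ V]
    (L : (Fin d → ℤ) → Module.End ℂ V)
    (ι : (Fin d → ℤ) → W →ₗ[ℂ] V)
    (hVint : DirectSum.IsInternal (fun u : Fin d → ℤ => (Wgr u).map (ι u)))
    (hιinj : ∀ u, ∀ w ∈ Wgr u, ι u w = 0 → w = 0)
    (hLm : ∀ m ∈ Rgrp h2z k, ∀ u, ∀ w ∈ Wgr u,
      L m (ι u w) = (∑ i, γ i * (α i + (u i : ℂ) + β * (m i : ℂ))) • ι (m + u) w)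
    (hLr : ∀ r, r ∉ Rgrp h2z k → ∀ u, ∀ w ∈ Wgr u,
      L r (ι u w) = ι (r + u) (ρ (Xmat h2z k q r) w)) :
    -- conclusion: `V(α,β,W)` is an irreducible `g`-module
    Nontrivial V ∧ ∀ U : Submodule ℂ V, (∀ x, ∀ v ∈ U, L x v ∈ U) → U = ⊥ ∨ U = ⊤ := by
  classical
  -- abbreviations
  set b : (Fin d → ℤ) → Module.End ℂ W := fun r => ρ (Xmat h2z k q r) with hb_def
  -- basic graded facts
  have hWgr_eq : ∀ {u u' : Fin d → ℤ}, u - u' ∈ Rgrp h2z k → Wgr u = Wgr u' := by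
    intro u u' hm
    rw [hWrep u, hWrep u', repZ_eq_of_sub_mem h2z k hm]
  have hcgrade : ∀ u, ∀ w ∈ Wgr u, ρ 1 w ∈ Wgr u := by
    intro u w hw
    have := hWgraded 0 u w hw
    rw [Xmat_zero, zero_add] at this
    exact this
  -- commutation of ρ 1 with everything
  have hccomm : ∀ (a : Matrix ((i : Fin z) → Fin (k i)) ((i : Fin z) → Fin (k i)) ℂ),
      ρ 1 * ρ a = ρ a * ρ 1 := by
    intro a
    have h3 := ρ.map_lie (x := (1 : Matrix ((i : Fin z) → Fin (k i)) ((i : Fin z) → Fin (k i)) ℂ))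
      (y := a)
    rw [show ⁅(1 : Matrix ((i : Fin z) → Fin (k i)) ((i : Fin z) → Fin (k i)) ℂ), a⁆ = 0 by
      rw [Ring.lie_def, one_mul, mul_one, sub_self], map_zero, Ring.lie_def] at h3
    exact sub_eq_zero.mp h3.symm
  have hccommw : ∀ (a : Matrix ((i : Fin z) → Fin (k i)) ((i : Fin z) → Fin (k i)) ℂ) (w : W),
      ρ 1 (ρ a w) = ρ a (ρ 1 w) := by
    intro a w
    have := LinearMap.ext_iff.mp (hccomm a) w
    simpa [Module.End.mul_apply] using this
  -- stability criterion
  have hstab : ∀ (S : Submodule ℂ W), (∀ w ∈ S, ρ 1 w ∈ S) →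
      (∀ r, r ∉ Rgrp h2z k → ∀ w ∈ S, b r w ∈ S) → ∀ (a) (w), w ∈ S → ρ a w ∈ S := by
    intro S hc hbr a w hw
    have hsp := Xmat_span h2z k q hk hq a
    induction hsp using Submodule.span_induction with
    | mem x hx =>
      obtain ⟨n, hn, rfl⟩ := hx
      by_cases hnR : n ∈ Rgrp h2z k
      · rw [Xmat_mem_eq_one h2z k q hk hq hnR]
        exact hc w hw
      · exact hbr n hnR w hw
    | zero => rw [map_zero, LinearMap.zero_apply]; exact Submodule.zero_mem S
    | add x y _ _ hx hy => rw [map_add, LinearMap.add_apply]; exact Submodule.add_mem S hx hy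
    | smul t x _ hx => rw [map_smul, LinearMap.smul_apply]; exact Submodule.smul_mem S t hx
  -- graded criterion for spans of homogeneous sets
  have hgraded_span : ∀ (T : Set W), (∀ t ∈ T, ∃ u, t ∈ Wgr u) →
      Submodule.span ℂ T = ⨆ s : {s : Fin d → ℤ // inGamma0 h2z k s},
        (Submodule.span ℂ T ⊓ Wgr s.1) := by
    intro T hT
    apply le_antisymm
    · rw [Submodule.span_le]
      intro t ht
      obtain ⟨u, hu⟩ := hT t ht
      have h1 : t ∈ Wgr (repZ h2z k u) := by rw [← hWrep]; exact hu
      exact (le_iSup (fun s : {s : Fin d → ℤ // inGamma0 h2z k s} =>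
        Submodule.span ℂ T ⊓ Wgr s.1) ⟨repZ h2z k u, repZ_mem h2z k hk u⟩)
        ⟨Submodule.subset_span ht, h1⟩
    · exact iSup_le (fun s => inf_le_left)
  -- decomposition and extraction on W
  have hWsup : (⨆ s : {s : Fin d → ℤ // inGamma0 h2z k s}, Wgr s.1) = ⊤ :=
    hWint.submodule_iSup_eq_top
  have hWind := hWint.submodule_iSupIndep
  have hzero_extract : ∀ (g : {s : Fin d → ℤ // inGamma0 h2z k s} → W)
      (F : Finset {s : Fin d → ℤ // inGamma0 h2z k s}),
      (∀ s ∈ F, g s ∈ Wgr s.1) → (∑ s ∈ F, g s) = 0 → ∀ s ∈ F, g s = 0 := by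
    intro g F hg hsum s hs
    have h1 : -(g s) = ∑ s' ∈ F.erase s, g s' := by
      rw [← Finset.add_sum_erase F g hs] at hsum
      exact (eq_neg_of_add_eq_zero_right hsum).symm
    have h2 : -(g s) ∈ (⨆ (j : {s : Fin d → ℤ // inGamma0 h2z k s}) (_ : j ≠ s), Wgr j.1) := by
      rw [h1]
      refine Submodule.sum_mem _ (fun j hj => ?_)
      exact (le_iSup₂ (f := fun (j' : {s : Fin d → ℤ // inGamma0 h2z k s}) (_ : j' ≠ s) =>
        Wgr j'.1) j (Finset.ne_of_mem_erase hj)) (hg j (Finset.mem_of_mem_erase hj))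
    have h3 : -(g s) ∈ Wgr s.1 := Submodule.neg_mem _ (hg s hs)
    have h4 := Submodule.disjoint_def.mp (hWind s) (-(g s)) h3 h2
    simpa using h4
  -- decomposition of elements of W
  have hWdecomp : ∀ x : W, ∃ f : Π₀ s : {s : Fin d → ℤ // inGamma0 h2z k s}, (Wgr s.1),
      (f.sum fun s v => (v : W)) = x := by
    intro x
    have hx : x ∈ (⨆ s : {s : Fin d → ℤ // inGamma0 h2z k s}, Wgr s.1) := by
      rw [hWsup]; exact Submodule.mem_top
    exact (Submodule.mem_iSup_iff_exists_dfinsupp' _ x).mp hx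
  constructor
  · -- Nontrivial V
    obtain ⟨w0, hw0⟩ := exists_ne (0 : W)
    obtain ⟨f, hf⟩ := hWdecomp w0
    have hcomp : ∃ s, (f s : W) ≠ 0 := by
      by_contra hall
      push_neg at hall
      apply hw0
      rw [← hf]
      simp only [DFinsupp.sum]
      exact Finset.sum_eq_zero (fun s _ => hall s)
    obtain ⟨s, hs⟩ := hcomp
    have hne2 : ι s.1 (f s) ≠ 0 := fun hcon => hs (hιinj s.1 (f s) (f s).2 hcon)
    exact ⟨ι s.1 (f s), 0, hne2⟩
  · intro U hU
    by_cases hUbot : U = ⊥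
    · exact Or.inl hUbot
    right
    -- the homogeneous pieces of U
    set SU : (Fin d → ℤ) → Submodule ℂ W := fun u => Wgr u ⊓ (U.comap (ι u)) with hSU_def
    -- a nonzero homogeneous element of U
    have hexists : ∃ (u₁ : Fin d → ℤ) (w₁ : W), w₁ ≠ 0 ∧ w₁ ∈ SU u₁ := by
      obtain ⟨v, hvU, hvne⟩ := (Submodule.ne_bot_iff U).mp hUbot
      have hv : v ∈ ⨆ u : Fin d → ℤ, (Wgr u).map (ι u) := by
        rw [hVint.submodule_iSup_eq_top]; trivial
      obtain ⟨f, hf⟩ := (Submodule.mem_iSup_iff_exists_dfinsupp' _ v).mp hv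
      have hpre : ∀ u, ∃ w, w ∈ Wgr u ∧ ι u w = ((f u : V)) := by
        intro u
        obtain ⟨w, hw, heq⟩ := Submodule.mem_map.mp (f u).2
        exact ⟨w, hw, heq⟩
      choose wf hwf hif using hpre
      set e : (Fin d → ℤ) → ℂ := fun u => ∑ i, γ i * (α i + ((u i : ℤ) : ℂ)) with he_def
      have hexp : ∀ (x : Fin d → ℤ),
          e x = (∑ i, γ i * α i) + ∑ i, γ i * ((x i : ℤ) : ℂ) := by
        intro x
        rw [he_def, ← Finset.sum_add_distrib]
        exact Finset.sum_congr rfl (fun i _ => by ring)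
      have heig : ∀ u ∈ f.support, L 0 ((f u : V)) = e u • (f u : V) := by
        intro u _
        rw [← hif u, hLm 0 (zero_mem _) u (wf u) (hwf u), zero_add]
        congr 1
        rw [he_def]
        refine Finset.sum_congr rfl (fun i _ => ?_)
        norm_num
      have heinj : ∀ u ∈ f.support, ∀ u' ∈ f.support, e u = e u' → u = u' := by
        intro u _ u' _ hee
        rw [hexp u, hexp u'] at hee
        exact ginner_inj γ hγ (add_left_cancel hee)
      have hsum : (∑ u ∈ f.support, ((f u : V))) ∈ U := by
        have : (∑ u ∈ f.support, ((f u : V))) = v := hf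
        rw [this]; exact hvU
      have hcomp := eigen_extract U (L 0) (hU 0) e f.support (fun u => (f u : V))
        heig heinj hsum
      have hnzc : ∃ u ∈ f.support, (f u : V) ≠ 0 := by
        by_contra hall
        push_neg at hall
        apply hvne
        rw [← hf]
        simp only [DFinsupp.sum]
        exact Finset.sum_eq_zero (fun u hu => hall u hu)
      obtain ⟨u₁, hu₁s, hu₁ne⟩ := hnzc
      refine ⟨u₁, wf u₁, ?_, ?_⟩
      · intro hcon
        apply hu₁ne
        rw [← hif u₁, hcon, map_zero]
      · exact Submodule.mem_inf.mpr ⟨hwf u₁,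
          by rw [Submodule.mem_comap, hif u₁]; exact hcomp u₁ hu₁s⟩
    obtain ⟨u₁, w₁, hw₁ne, hw₁SU⟩ := hexists
    have hw₁gr : w₁ ∈ Wgr u₁ := (Submodule.mem_inf.mp hw₁SU).1
    -- transport lemma
    have htrans : ∀ (n : Fin d → ℤ), inGamma0 h2z k n → n ≠ 0 →
        ∀ (u u' : Fin d → ℤ), u' - u - n ∈ Rgrp h2z k → ∀ w ∈ SU u, b n w ∈ SU u' := by
      intro n hn hne u u' hm w hw
      have hw1 : w ∈ Wgr u := (Submodule.mem_inf.mp hw).1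
      have hw2 : ι u w ∈ U := (Submodule.mem_inf.mp hw).2
      have hrR : (u' - u) ∉ Rgrp h2z k := by
        intro hcon
        have hnR : n ∈ Rgrp h2z k := by
          have := sub_mem hcon hm
          rwa [show u' - u - (u' - u - n) = n by ring] at this
        exact hne (eq_zero_of_inGamma0_of_mem h2z k hn hnR)
      have hXeq : Xmat h2z k q (u' - u) = Xmat h2z k q n := by
        rw [show u' - u = n + (u' - u - n) by ring]
        exact Xmat_add_right_mem h2z k q hk hq n hm
      have hUmem : L (u' - u) (ι u w) ∈ U := hU _ _ hw2
      rw [hLr (u' - u) hrR u w hw1, show u' - u + u = u' by ring, hXeq] at hUmem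
      have hgr : ρ (Xmat h2z k q n) w ∈ Wgr u' := by
        have := hWgraded (u' - u) u w hw1
        rwa [show u' - u + u = u' by ring, hXeq] at this
      exact Submodule.mem_inf.mpr ⟨hgr, hUmem⟩
    -- word machinery
    set Wapply : List {n : Fin d → ℤ // inGamma0 h2z k n ∧ n ≠ 0} → W → W :=
      fun ω w => ω.foldr (fun n acc => b n.1 acc) w with hWapply_def
    set wsum : List {n : Fin d → ℤ // inGamma0 h2z k n ∧ n ≠ 0} → (Fin d → ℤ) :=
      fun ω => (ω.map Subtype.val).sum with hwsum_def
    have hWapply_cons : ∀ n ω w, Wapply (n :: ω) w = b n.1 (Wapply ω w) := fun n ω w => rfl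
    have hwsum_nil : wsum [] = 0 := rfl
    have hwsum_cons : ∀ n ω, wsum (n :: ω) = n.1 + wsum ω := by
      intro n ω
      simp [hwsum_def]
    have hWapply_grade : ∀ ω, ∀ u (w : W), w ∈ Wgr u → Wapply ω w ∈ Wgr (wsum ω + u) := by
      intro ω
      induction ω with
      | nil =>
        intro u w hw
        rw [hwsum_nil, zero_add]
        exact hw
      | cons n ω ih =>
        intro u w hw
        rw [hWapply_cons, hwsum_cons]
        have := hWgraded n.1 (wsum ω + u) _ (ih u w hw)
        rwa [show n.1 + (wsum ω + u) = n.1 + wsum ω + u by ring] at this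
    have hWapply_SU : ∀ ω, ω ≠ [] → ∀ u', u' - u₁ - wsum ω ∈ Rgrp h2z k →
        Wapply ω w₁ ∈ SU u' := by
      intro ω
      induction ω with
      | nil => intro hcon; exact absurd rfl hcon
      | cons n ω ih =>
        intro _ u' hm
        by_cases hω : ω = []
        · subst hω
          rw [hWapply_cons]
          refine htrans n.1 n.2.1 n.2.2 u₁ u' ?_ w₁ hw₁SU
          rw [hwsum_cons, hwsum_nil, add_zero] at hm
          exact hm
        · have hx := ih hω (u₁ + wsum ω)
            (by rw [show u₁ + wsum ω - u₁ - wsum ω = 0 by ring]; exact zero_mem _)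
          rw [hWapply_cons]
          refine htrans n.1 n.2.1 n.2.2 (u₁ + wsum ω) u' ?_ _ hx
          rw [show u' - (u₁ + wsum ω) - n.1 = u' - u₁ - (n.1 + wsum ω) by ring]
          rwa [hwsum_cons] at hm
    -- ρ(1) acts as a scalar
    have hcsc : ∃ t : ℂ, ∀ x : W, ρ 1 x = t • x := by
      -- a countable spanning set
      set capply : List (Option {n : Fin d → ℤ // inGamma0 h2z k n ∧ n ≠ 0}) → W → W :=
        fun ω w => ω.foldr (fun o acc => Option.elim o (ρ 1 acc) (fun n => b n.1 acc)) w
        with hcapply_def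
      have hcap_grade : ∀ ω (u : Fin d → ℤ) (w : W), w ∈ Wgr u →
          ∃ u', capply ω w ∈ Wgr u' := by
        intro ω
        induction ω with
        | nil => intro u w hw; exact ⟨u, hw⟩
        | cons o ω ih =>
          intro u w hw
          obtain ⟨u', hu'⟩ := ih u w hw
          cases o with
          | none => exact ⟨u', hcgrade u' _ hu'⟩
          | some n => exact ⟨n.1 + u', hWgraded n.1 u' _ hu'⟩
      set CW : Submodule ℂ W := Submodule.span ℂ
        (Set.range (fun ω : List (Option {n : Fin d → ℤ // inGamma0 h2z k n ∧ n ≠ 0}) =>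
          capply ω w₁)) with hCW_def
      have hCWc : ∀ x ∈ CW, ρ 1 x ∈ CW := by
        intro x hx
        induction hx using Submodule.span_induction with
        | mem x hx =>
          obtain ⟨ω, rfl⟩ := hx
          exact Submodule.subset_span ⟨none :: ω, rfl⟩
        | zero => rw [map_zero]; exact Submodule.zero_mem _
        | add x y _ _ hx hy => rw [map_add]; exact Submodule.add_mem _ hx hy
        | smul t x _ hx => rw [map_smul]; exact Submodule.smul_mem _ t hx
      have hCWb : ∀ r, r ∉ Rgrp h2z k → ∀ x ∈ CW, b r x ∈ CW := by
        intro r hr x hx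
        have hrep_ne : repZ h2z k r ≠ 0 :=
          fun hcon => hr ((mem_Rgrp_iff_repZ_eq_zero h2z k).mpr hcon)
        have hXr : Xmat h2z k q r = Xmat h2z k q (repZ h2z k r) := Xmat_eq_repZ h2z k q hk hq r
        induction hx using Submodule.span_induction with
        | mem y hy =>
          obtain ⟨ω, rfl⟩ := hy
          show ρ (Xmat h2z k q r) (capply ω w₁) ∈ CW
          rw [hXr]
          exact Submodule.subset_span
            ⟨some ⟨repZ h2z k r, repZ_mem h2z k hk r, hrep_ne⟩ :: ω, rfl⟩
        | zero => rw [map_zero]; exact Submodule.zero_mem _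
        | add x y _ _ hx hy => rw [map_add]; exact Submodule.add_mem _ hx hy
        | smul t x _ hx => rw [map_smul]; exact Submodule.smul_mem _ t hx
      have hCWgr : CW = ⨆ s : {s : Fin d → ℤ // inGamma0 h2z k s}, (CW ⊓ Wgr s.1) := by
        rw [hCW_def]
        refine hgraded_span _ ?_
        rintro t ⟨ω, rfl⟩
        exact hcap_grade ω u₁ w₁ hw₁gr
      have hCWne : CW ≠ ⊥ := by
        intro hcon
        apply hw₁ne
        have hmem : w₁ ∈ CW := Submodule.subset_span ⟨[], rfl⟩
        rw [hcon] at hmem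
        simpa using hmem
      have hCWtop : CW = ⊤ := (hWirr CW (hstab CW hCWc hCWb) hCWgr).resolve_left hCWne
      -- rank bound
      have hrank : Module.rank ℂ W ≤ Cardinal.aleph0 := by
        have h1 : Module.rank ℂ (↥CW) ≤ Cardinal.aleph0 := by
          refine le_trans (rank_span_le _) ?_
          have : (Set.range (fun ω : List (Option {n : Fin d → ℤ // inGamma0 h2z k n ∧ n ≠ 0}) =>
            capply ω w₁)).Countable := Set.countable_range _
          have := this.to_subtype
          exact Cardinal.mk_le_aleph0
        calc Module.rank ℂ W = Module.rank ℂ (⊤ : Submodule ℂ W) := (rank_top ℂ W).symm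
        _ = Module.rank ℂ (↥CW) := by rw [hCWtop]
        _ ≤ Cardinal.aleph0 := h1
      -- dichotomy
      by_contra hsc
      push_neg at hsc
      have hbij : ∀ t : ℂ, Function.Bijective (ρ 1 - t • (1 : Module.End ℂ W)) := by
        intro t
        obtain ⟨xt, hxt⟩ := hsc t
        have hTtapp : ∀ x : W, (ρ 1 - t • (1 : Module.End ℂ W)) x = ρ 1 x - t • x := by
          intro x
          simp [LinearMap.sub_apply, LinearMap.smul_apply]
        have hTts : ∀ (a) (x : W), (ρ 1 - t • (1 : Module.End ℂ W)) (ρ a x)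
            = ρ a ((ρ 1 - t • (1 : Module.End ℂ W)) x) := by
          intro a x
          rw [hTtapp, hTtapp, map_sub, map_smul, hccommw]
        have hTgr : ∀ (u : Fin d → ℤ) (x : W), x ∈ Wgr u →
            (ρ 1 - t • (1 : Module.End ℂ W)) x ∈ Wgr u := by
          intro u x hx
          rw [hTtapp]
          exact Submodule.sub_mem _ (hcgrade u x hx) (Submodule.smul_mem _ t hx)
        have hker : LinearMap.ker (ρ 1 - t • (1 : Module.End ℂ W)) = ⊥ := by
          have hstabK : ∀ (a) (x), x ∈ LinearMap.ker (ρ 1 - t • (1 : Module.End ℂ W)) →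
              ρ a x ∈ LinearMap.ker (ρ 1 - t • (1 : Module.End ℂ W)) := by
            intro a x hx
            rw [LinearMap.mem_ker] at hx ⊢
            rw [hTts, hx, map_zero]
          have hgrK : LinearMap.ker (ρ 1 - t • (1 : Module.End ℂ W))
              = ⨆ s : {s : Fin d → ℤ // inGamma0 h2z k s},
                (LinearMap.ker (ρ 1 - t • (1 : Module.End ℂ W)) ⊓ Wgr s.1) := by
            apply le_antisymm
            · intro x hx
              obtain ⟨f, hfx⟩ := hWdecomp x
              have hcz : ∀ s ∈ f.support, (ρ 1 - t • (1 : Module.End ℂ W)) (f s : W) = 0 := by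
                refine hzero_extract (fun s => (ρ 1 - t • (1 : Module.End ℂ W)) (f s : W))
                  f.support (fun s _ => hTgr s.1 _ (f s).2) ?_
                rw [← map_sum]
                have hfs : (∑ s ∈ f.support, ((f s) : W)) = x := hfx
                rw [hfs]
                exact LinearMap.mem_ker.mp hx
              have : x = ∑ s ∈ f.support, ((f s) : W) := hfx.symm
              rw [this]
              refine Submodule.sum_mem _ (fun s hsm => ?_)
              refine (le_iSup (fun s : {s : Fin d → ℤ // inGamma0 h2z k s} =>
                (LinearMap.ker (ρ 1 - t • (1 : Module.End ℂ W)) ⊓ Wgr s.1)) s) ?_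
              exact Submodule.mem_inf.mpr ⟨LinearMap.mem_ker.mpr (hcz s hsm), (f s).2⟩
            · exact iSup_le (fun s => inf_le_left)
          rcases hWirr _ hstabK hgrK with hk0 | hk1
          · exact hk0
          · exfalso
            apply hxt
            have hxk : xt ∈ LinearMap.ker (ρ 1 - t • (1 : Module.End ℂ W)) := by
              rw [hk1]; trivial
            have := LinearMap.mem_ker.mp hxk
            rw [hTtapp] at this
            exact sub_eq_zero.mp this
        have hrange : LinearMap.range (ρ 1 - t • (1 : Module.End ℂ W)) = ⊤ := by
          have hstabR : ∀ (a) (y), y ∈ LinearMap.range (ρ 1 - t • (1 : Module.End ℂ W)) →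
              ρ a y ∈ LinearMap.range (ρ 1 - t • (1 : Module.End ℂ W)) := by
            intro a y hy
            obtain ⟨x, rfl⟩ := hy
            exact ⟨ρ a x, (hTts a x).symm ▸ rfl⟩
          have hgrR : LinearMap.range (ρ 1 - t • (1 : Module.End ℂ W))
              = ⨆ s : {s : Fin d → ℤ // inGamma0 h2z k s},
                (LinearMap.range (ρ 1 - t • (1 : Module.End ℂ W)) ⊓ Wgr s.1) := by
            apply le_antisymm
            · rintro y ⟨x, rfl⟩
              obtain ⟨f, hfx⟩ := hWdecomp x
              have hfs : (∑ s ∈ f.support, ((f s) : W)) = x := hfx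
              rw [← hfs, map_sum]
              refine Submodule.sum_mem _ (fun s hsm => ?_)
              refine (le_iSup (fun s : {s : Fin d → ℤ // inGamma0 h2z k s} =>
                (LinearMap.range (ρ 1 - t • (1 : Module.End ℂ W)) ⊓ Wgr s.1)) s) ?_
              exact Submodule.mem_inf.mpr ⟨⟨(f s : W), rfl⟩, hTgr s.1 _ (f s).2⟩
            · exact iSup_le (fun s => inf_le_left)
          rcases hWirr _ hstabR hgrR with hr0 | hr1
          · exfalso
            obtain ⟨xt2, hxt2⟩ := hsc t
            apply hxt2
            have : (ρ 1 - t • (1 : Module.End ℂ W)) xt2 ∈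
                LinearMap.range (ρ 1 - t • (1 : Module.End ℂ W)) := ⟨xt2, rfl⟩
            rw [hr0] at this
            have h0 := (Submodule.mem_bot ℂ).mp this
            rw [hTtapp] at h0
            exact sub_eq_zero.mp h0
          · exact hr1
        exact ⟨LinearMap.ker_eq_bot.mp hker, LinearMap.range_eq_top.mp hrange⟩
      -- inverse family
      set ξ : ℂ → W := fun t => Function.surjInv (hbij t).2 w₁ with hξ_def
      have hξap : ∀ t, (ρ 1 - t • (1 : Module.End ℂ W)) (ξ t) = w₁ :=
        fun t => Function.surjInv_eq (hbij t).2 w₁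
      have haeval_lin : ∀ t : ℂ, Polynomial.aeval (ρ 1) (Polynomial.X - Polynomial.C t)
          = ρ 1 - t • (1 : Module.End ℂ W) := by
        intro t
        rw [map_sub, Polynomial.aeval_X, Polynomial.aeval_C, Algebra.algebraMap_eq_smul_one]
      have hinj : ∀ t : ℂ, Function.Injective (ρ 1 - t • (1 : Module.End ℂ W)) :=
        fun t => (hbij t).1
      have hli : LinearIndependent ℂ ξ := by
        rw [linearIndependent_iff']
        intro s g hsum t₀ ht₀
        set p : Polynomial ℂ := ∑ t ∈ s, Polynomial.C (g t) *
          ∏ t' ∈ s.erase t, (Polynomial.X - Polynomial.C t') with hp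
        have h1 : ∀ t ∈ s, (Polynomial.aeval (ρ 1)
            (∏ t' ∈ s, (Polynomial.X - Polynomial.C t'))) (ξ t)
            = (Polynomial.aeval (ρ 1)
              (∏ t' ∈ s.erase t, (Polynomial.X - Polynomial.C t'))) w₁ := by
          intro t ht
          rw [← Finset.prod_erase_mul s _ ht, map_mul, Module.End.mul_apply, haeval_lin, hξap]
        have h2 : (Polynomial.aeval (ρ 1) (∏ t' ∈ s, (Polynomial.X - Polynomial.C t')))
            (∑ t ∈ s, g t • ξ t)
            = ∑ t ∈ s, g t • ((Polynomial.aeval (ρ 1)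
              (∏ t' ∈ s.erase t, (Polynomial.X - Polynomial.C t'))) w₁) := by
          rw [map_sum]
          exact Finset.sum_congr rfl (fun t ht => by rw [map_smul, h1 t ht])
        have h3 : (Polynomial.aeval (ρ 1) p) w₁
            = ∑ t ∈ s, g t • ((Polynomial.aeval (ρ 1)
              (∏ t' ∈ s.erase t, (Polynomial.X - Polynomial.C t'))) w₁) := by
          rw [hp, map_sum, LinearMap.sum_apply]
          refine Finset.sum_congr rfl (fun t ht => ?_)
          rw [map_mul, Polynomial.aeval_C, Module.End.mul_apply, Module.algebraMap_end_apply]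
        rw [hsum, map_zero] at h2
        have happ : (Polynomial.aeval (ρ 1) p) w₁ = 0 := by rw [h3, ← h2]
        have hp0 : p = 0 := by
          by_contra hpne
          apply hw₁ne
          refine aeval_inj_of_linear_inj (ρ 1) hinj p.natDegree p le_rfl hpne ?_
          rw [happ, map_zero]
        have heval : Polynomial.eval t₀ p = g t₀ * ∏ t' ∈ s.erase t₀, (t₀ - t') := by
          rw [hp, Polynomial.eval_finset_sum]
          rw [Finset.sum_eq_single t₀]
          · rw [Polynomial.eval_mul, Polynomial.eval_C, Polynomial.eval_prod]
            congr 1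
            exact Finset.prod_congr rfl (fun t' _ => by
              rw [Polynomial.eval_sub, Polynomial.eval_X, Polynomial.eval_C])
          · intro t ht htne
            have ht₀e : t₀ ∈ s.erase t := Finset.mem_erase.mpr ⟨fun hcon => htne hcon.symm, ht₀⟩
            rw [Polynomial.eval_mul, Polynomial.eval_prod]
            rw [Finset.prod_eq_zero ht₀e (by
              rw [Polynomial.eval_sub, Polynomial.eval_X, Polynomial.eval_C, sub_self]),
              mul_zero]
          · intro hcon
            exact absurd ht₀ hcon
        rw [hp0, Polynomial.eval_zero] at heval
        have hprodne : (∏ t' ∈ s.erase t₀, (t₀ - t')) ≠ 0 :=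
          Finset.prod_ne_zero_iff.mpr (fun t' ht' =>
            sub_ne_zero.mpr (fun hcon => (Finset.ne_of_mem_erase ht') hcon.symm))
        exact (mul_eq_zero.mp heval.symm).resolve_right hprodne
      -- cardinality contradiction
      have hcard := hli.cardinal_lift_le_rank
      have hlt : (Cardinal.aleph0 : Cardinal) < (Cardinal.mk ℂ) := by
        rw [Cardinal.mk_complex]
        exact Cardinal.aleph0_lt_continuum
      have hcon1 := le_trans hcard
        (le_trans (Cardinal.lift_le.mpr hrank) (le_of_eq Cardinal.lift_aleph0))
      exact absurd (lt_of_lt_of_le (Cardinal.aleph0_lt_lift.mpr hlt) hcon1) (lt_irrefl _)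
    obtain ⟨t0, ht0⟩ := hcsc
    -- the span of nonempty word images
    set Yset : Set W := {x | ∃ ω : List {n : Fin d → ℤ // inGamma0 h2z k n ∧ n ≠ 0},
      ω ≠ [] ∧ x = Wapply ω w₁} with hYset_def
    set Y : Submodule ℂ W := Submodule.span ℂ Yset with hY_def
    have hYb : ∀ r, r ∉ Rgrp h2z k → ∀ x ∈ Y, b r x ∈ Y := by
      intro r hr x hx
      have hrep_ne : repZ h2z k r ≠ 0 :=
        fun hcon => hr ((mem_Rgrp_iff_repZ_eq_zero h2z k).mpr hcon)
      have hXr : Xmat h2z k q r = Xmat h2z k q (repZ h2z k r) := Xmat_eq_repZ h2z k q hk hq r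
      induction hx using Submodule.span_induction with
      | mem y hy =>
        obtain ⟨ω, hωne, rfl⟩ := hy
        show ρ (Xmat h2z k q r) (Wapply ω w₁) ∈ Y
        rw [hXr]
        exact Submodule.subset_span ⟨⟨repZ h2z k r, repZ_mem h2z k hk r, hrep_ne⟩ :: ω,
          List.cons_ne_nil _ _, rfl⟩
      | zero => rw [map_zero]; exact Submodule.zero_mem _
      | add x y _ _ hx hy => rw [map_add]; exact Submodule.add_mem _ hx hy
      | smul t x _ hx => rw [map_smul]; exact Submodule.smul_mem _ t hx
    have hYc : ∀ x ∈ Y, ρ 1 x ∈ Y := by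
      intro x hx
      rw [ht0 x]
      exact Submodule.smul_mem _ t0 hx
    have hYgr : Y = ⨆ s : {s : Fin d → ℤ // inGamma0 h2z k s}, (Y ⊓ Wgr s.1) := by
      rw [hY_def]
      refine hgraded_span Yset ?_
      rintro t ⟨ω, hωne, rfl⟩
      exact ⟨wsum ω + u₁, hWapply_grade ω u₁ w₁ hw₁gr⟩
    rcases hWirr Y (hstab Y hYc hYb) hYgr with hYbot | hYtop
    · -- degenerate case: contradiction with dim W > 1
      exfalso
      set Y' : Submodule ℂ W := Submodule.span ℂ (insert w₁ Yset) with hY'_def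
      have hY'b : ∀ r, r ∉ Rgrp h2z k → ∀ x ∈ Y', b r x ∈ Y' := by
        intro r hr x hx
        have hrep_ne : repZ h2z k r ≠ 0 :=
          fun hcon => hr ((mem_Rgrp_iff_repZ_eq_zero h2z k).mpr hcon)
        have hXr : Xmat h2z k q r = Xmat h2z k q (repZ h2z k r) := Xmat_eq_repZ h2z k q hk hq r
        induction hx using Submodule.span_induction with
        | mem y hy =>
          rcases Set.mem_insert_iff.mp hy with rfl | hyy
          · show ρ (Xmat h2z k q r) y ∈ Y'
            rw [hXr]
            refine Submodule.subset_span (Set.mem_insert_of_mem _ ?_)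
            exact ⟨[⟨repZ h2z k r, repZ_mem h2z k hk r, hrep_ne⟩], List.cons_ne_nil _ _, rfl⟩
          · obtain ⟨ω, hωne, rfl⟩ := hyy
            show ρ (Xmat h2z k q r) (Wapply ω w₁) ∈ Y'
            rw [hXr]
            refine Submodule.subset_span (Set.mem_insert_of_mem _ ?_)
            exact ⟨⟨repZ h2z k r, repZ_mem h2z k hk r, hrep_ne⟩ :: ω, List.cons_ne_nil _ _, rfl⟩
        | zero => rw [map_zero]; exact Submodule.zero_mem _
        | add x y _ _ hx hy => rw [map_add]; exact Submodule.add_mem _ hx hy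
        | smul t x _ hx => rw [map_smul]; exact Submodule.smul_mem _ t hx
      have hY'c : ∀ x ∈ Y', ρ 1 x ∈ Y' := by
        intro x hx
        rw [ht0 x]
        exact Submodule.smul_mem _ t0 hx
      have hY'gr : Y' = ⨆ s : {s : Fin d → ℤ // inGamma0 h2z k s}, (Y' ⊓ Wgr s.1) := by
        rw [hY'_def]
        refine hgraded_span _ ?_
        intro t ht
        rcases Set.mem_insert_iff.mp ht with rfl | ⟨ω, hωne, rfl⟩
        · exact ⟨u₁, hw₁gr⟩
        · exact ⟨wsum ω + u₁, hWapply_grade ω u₁ w₁ hw₁gr⟩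
      have hY'ne : Y' ≠ ⊥ := by
        intro hcon
        apply hw₁ne
        have hmem : w₁ ∈ Y' := Submodule.subset_span (Set.mem_insert _ _)
        rw [hcon] at hmem
        simpa using hmem
      have hY'top : Y' = ⊤ := (hWirr Y' (hstab Y' hY'c hY'b) hY'gr).resolve_left hY'ne
      have hYzero : ∀ x ∈ Yset, x = (0:W) := by
        intro x hx
        have hmem : x ∈ Y := Submodule.subset_span hx
        rw [hYbot] at hmem
        simpa using hmem
      have hsub : insert w₁ Yset ⊆ ({w₁, 0} : Set W) := by
        intro x hx
        rcases Set.mem_insert_iff.mp hx with rfl | hxx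
        · exact Set.mem_insert _ _
        · exact Set.mem_insert_of_mem _ (by rw [hYzero x hxx]; exact rfl)
      have hle : Y' ≤ Submodule.span ℂ ({w₁} : Set W) := by
        rw [hY'_def]
        refine le_trans (Submodule.span_mono hsub) ?_
        refine Submodule.span_le.mpr ?_
        intro x hx
        rcases Set.mem_insert_iff.mp hx with rfl | hxx
        · exact Submodule.mem_span_singleton_self x
        · rw [Set.mem_singleton_iff.mp hxx]
          exact Submodule.zero_mem _
      have hrank1 : Module.rank ℂ W ≤ 1 := by
        calc Module.rank ℂ W = Module.rank ℂ (⊤ : Submodule ℂ W) := (rank_top ℂ W).symm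
        _ = Module.rank ℂ (↥Y') := by rw [hY'top]
        _ ≤ Module.rank ℂ (↥(Submodule.span ℂ ({w₁} : Set W))) := Submodule.rank_mono hle
        _ ≤ Cardinal.mk ({w₁} : Set W) := rank_span_le _
        _ = 1 := Cardinal.mk_singleton _
      exact absurd hdim (not_lt.mpr hrank1)
    · -- main case: conclude U = ⊤
      set P : {s : Fin d → ℤ // inGamma0 h2z k s} → Submodule ℂ W := fun s =>
        Submodule.span ℂ {x | ∃ ω, ω ≠ [] ∧ x = Wapply ω w₁ ∧ repZ h2z k (wsum ω + u₁) = s.1}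
        with hP_def
      have hPle : ∀ s, P s ≤ Wgr s.1 := by
        intro s
        rw [hP_def]
        refine Submodule.span_le.mpr ?_
        rintro x ⟨ω, hωne, rfl, hcls⟩
        have h1 := hWapply_grade ω u₁ w₁ hw₁gr
        rwa [hWrep (wsum ω + u₁), hcls] at h1
      have hPsup : (⨆ s, P s) = ⊤ := by
        rw [← top_le_iff, ← hYtop, hY_def]
        refine Submodule.span_le.mpr ?_
        rintro x ⟨ω, hωne, rfl⟩
        refine (le_iSup P ⟨repZ h2z k (wsum ω + u₁), repZ_mem h2z k hk _⟩) ?_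
        exact Submodule.subset_span ⟨ω, hωne, rfl, rfl⟩
      have hPSU : ∀ (u₀ : Fin d → ℤ),
          P ⟨repZ h2z k u₀, repZ_mem h2z k hk u₀⟩ ≤ SU u₀ := by
        intro u₀
        rw [hP_def]
        refine Submodule.span_le.mpr ?_
        rintro x ⟨ω, hωne, rfl, hcls⟩
        refine hWapply_SU ω hωne u₀ ?_
        have h2 := sub_mem_of_repZ_eq h2z k (u := u₀) (u' := wsum ω + u₁) (by rw [hcls])
        rwa [show u₀ - (wsum ω + u₁) = u₀ - u₁ - wsum ω by ring] at h2
      have hfull : ∀ (u₀ : Fin d → ℤ), ∀ x ∈ Wgr u₀, x ∈ SU u₀ := by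
        intro u₀ x hx
        set s₀ : {s : Fin d → ℤ // inGamma0 h2z k s} :=
          ⟨repZ h2z k u₀, repZ_mem h2z k hk u₀⟩ with hs₀
        have hx0 : x ∈ Wgr s₀.1 := by rw [hs₀]; rw [← hWrep]; exact hx
        have hxt : x ∈ (⨆ s, P s) := by rw [hPsup]; trivial
        obtain ⟨f, hfx⟩ := (Submodule.mem_iSup_iff_exists_dfinsupp' _ x).mp hxt
        have hfW : ∀ s, (f s : W) ∈ Wgr s.1 := fun s => hPle s (f s).2
        have hsum : (∑ s ∈ f.support, ((f s) : W)) = x := hfx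
        have hxs : x - (f s₀ : W) = ∑ s ∈ f.support.erase s₀, ((f s) : W) := by
          by_cases hmem : s₀ ∈ f.support
          · rw [← hsum, ← Finset.add_sum_erase f.support _ hmem, add_sub_cancel_left]
          · have h0 : (f s₀ : W) = 0 := by rw [DFinsupp.notMem_support_iff.mp hmem]; rfl
            rw [Finset.erase_eq_of_notMem hmem, hsum, h0, sub_zero]
        have hz1 : x - (f s₀ : W) ∈ Wgr s₀.1 := Submodule.sub_mem _ hx0 (hfW s₀)
        have hz2 : x - (f s₀ : W) ∈
            ⨆ (j : {s : Fin d → ℤ // inGamma0 h2z k s}) (_ : j ≠ s₀), Wgr j.1 := by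
          rw [hxs]
          refine Submodule.sum_mem _ (fun j hj => ?_)
          exact (le_iSup₂ (f := fun (j' : {s : Fin d → ℤ // inGamma0 h2z k s})
            (_ : j' ≠ s₀) => Wgr j'.1) j (Finset.ne_of_mem_erase hj)) (hfW j)
        have hz0 := Submodule.disjoint_def.mp (hWind s₀) _ hz1 hz2
        have hxeq : x = (f s₀ : W) := by rwa [sub_eq_zero] at hz0
        rw [hxeq]
        exact hPSU u₀ (f s₀).2
      have hUtop : (⊤ : Submodule ℂ V) ≤ U := by
        rw [← hVint.submodule_iSup_eq_top]
        refine iSup_le (fun u => ?_)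
        rintro v ⟨w, hw, rfl⟩
        exact Submodule.mem_comap.mp (Submodule.mem_inf.mp (hfull u w hw)).2
      exact top_unique hUtop
end
end

section
/- The derived subalgebra of 𝓛^x decomposes as [𝓛^x, 𝓛^x] = [𝓛^x_0, 𝓛^x_0] ⊕ (⊕_{j≥1} 𝓛^x_j); explicitly, [𝓛^x, 𝓛^x] is the direct sum of span{γ_j x_i d_γ − γ_i x_j d_γ : 1 ≤ i < j ≤ d} and span{x^m d_γ : m ∈ ℕ^d, |m| ≥ 2}. -/
open scoped BigOperators

noncomputable section

/-- `subE v i = v - e_i` (with truncated subtraction in `ℕ^d`). -/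
def subE {d : ℕ} (v : Fin d → ℕ) (i : Fin d) : Fin d → ℕ :=
  Function.update v i (v i - 1)

lemma subE_ne {d : ℕ} {m n : Fin d → ℕ} (hm : m ≠ 0) (hn : n ≠ 0) (i : Fin d) :
    subE (m + n) i ≠ 0 := by
  intro h
  obtain ⟨j, hj⟩ : ∃ j, m j ≠ 0 := by
    by_contra hc; push_neg at hc; exact hm (funext fun j => hc j)
  obtain ⟨j', hj'⟩ : ∃ j', n j' ≠ 0 := by
    by_contra hc; push_neg at hc; exact hn (funext fun j => hc j)
  by_cases hji : j = i
  · by_cases hj'i : j' = i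
    · rw [hji] at hj; rw [hj'i] at hj'
      have := congrFun h i
      simp only [subE, Function.update_self, Pi.add_apply, Pi.zero_apply] at this
      omega
    · have := congrFun h j'
      simp only [subE, Function.update_of_ne hj'i, Pi.add_apply, Pi.zero_apply] at this
      omega
  · have := congrFun h j
    simp only [subE, Function.update_of_ne hji, Pi.add_apply, Pi.zero_apply] at this
    omega

/-- The index `e_i ∈ ℕ^d ∖ {0}`. -/
def eIdx {d : ℕ} (i : Fin d) : {m : Fin d → ℕ // m ≠ 0} :=
  ⟨fun j => if j = i then 1 else 0, by
    intro h
    have := congrFun h i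
    simp at this⟩

/-- The defining bracket relations of the Lie algebra `𝓛^x`, spanned by the basis
`{x^m d_γ : m ∈ ℕ^d, m ≠ 0}` with `[x^m d_γ, x^n d_γ] = ∑ γ_i (n_i - m_i) x^{m+n-e_i} d_γ`. -/
def LxRel {d : ℕ} (γ : Fin d → ℂ) {Lx : Type*} [LieRing Lx] [LieAlgebra ℂ Lx]
    (b : Module.Basis {m : Fin d → ℕ // m ≠ 0} ℂ Lx) : Prop :=
  ∀ m n : {m : Fin d → ℕ // m ≠ 0},
    ⁅b m, b n⁆ = ∑ i : Fin d,
      (γ i * ((n.1 i : ℂ) - (m.1 i : ℂ))) • b ⟨subE (m.1 + n.1) i, subE_ne m.2 n.2 i⟩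

/- ### Auxiliary lemmas -/

lemma eIdx_apply {d : ℕ} (i j : Fin d) : (eIdx i).1 j = if j = i then 1 else 0 := rfl

lemma one_le_sum' {d : ℕ} (m : {m : Fin d → ℕ // m ≠ 0}) : 1 ≤ ∑ l, m.1 l := by
  obtain ⟨j, hj⟩ := Function.ne_iff.mp m.2
  simp only [Pi.zero_apply] at hj
  have h := Finset.single_le_sum (f := m.1) (fun _ _ => Nat.zero_le _) (Finset.mem_univ j)
  omega

lemma sum_subE' {d : ℕ} (v : Fin d → ℕ) (i : Fin d) (hv : 1 ≤ v i) :
    ∑ l, subE v i l = (∑ l, v l) - 1 := by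
  have h1 : ∑ l, subE v i l = (v i - 1) + ∑ l ∈ Finset.univ \ {i}, v l := by
    rw [subE, Finset.sum_update_of_mem (Finset.mem_univ i)]
  have h2 : v i + ∑ l ∈ Finset.univ.erase i, v l = ∑ l, v l :=
    Finset.add_sum_erase _ _ (Finset.mem_univ i)
  rw [← Finset.sdiff_singleton_eq_erase] at h2
  omega

lemma eq_eIdx' {d : ℕ} (m : {m : Fin d → ℕ // m ≠ 0}) (h : ∑ l, m.1 l = 1) :
    ∃ p, m = eIdx p := by
  obtain ⟨j, hj⟩ := Function.ne_iff.mp m.2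
  simp only [Pi.zero_apply] at hj
  have hsplit := Finset.add_sum_erase Finset.univ m.1 (Finset.mem_univ j)
  refine ⟨j, Subtype.ext (funext fun l => ?_)⟩
  by_cases hl : l = j
  · subst hl
    have h2 : m.1 l ≤ ∑ i ∈ Finset.univ, m.1 i :=
      Finset.single_le_sum (fun _ _ => Nat.zero_le _) (Finset.mem_univ l)
    simp [eIdx_apply]
    omega
  · have h2 : m.1 l ≤ ∑ i ∈ Finset.univ.erase j, m.1 i :=
      Finset.single_le_sum (fun _ _ => Nat.zero_le _)
        (Finset.mem_erase.mpr ⟨hl, Finset.mem_univ l⟩)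
    simp only [eIdx_apply, if_neg hl]
    omega

lemma lie_single {d : ℕ} {γ : Fin d → ℂ} {Lx : Type*} [LieRing Lx] [LieAlgebra ℂ Lx]
    {b : Module.Basis {m : Fin d → ℕ // m ≠ 0} ℂ Lx} (hb : LxRel γ b) {p q : Fin d} (hpq : p ≠ q) :
    ⁅b (eIdx p), b (eIdx q)⁆ = γ q • b (eIdx p) - γ p • b (eIdx q) := by
  rw [hb]
  rw [Finset.sum_eq_add p q hpq
    (by
      intro c _ hc
      have h1 : (eIdx q).1 c = 0 := by simp [eIdx_apply, hc.2]
      have h2 : (eIdx p).1 c = 0 := by simp [eIdx_apply, hc.1]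
      rw [h1, h2]; simp)
    (fun h => absurd (Finset.mem_univ p) h)
    (fun h => absurd (Finset.mem_univ q) h)]
  have hidx1 : (⟨subE ((eIdx p).1 + (eIdx q).1) p, subE_ne (eIdx p).2 (eIdx q).2 p⟩ :
      {m : Fin d → ℕ // m ≠ 0}) = eIdx q := by
    refine Subtype.ext (funext fun j => ?_)
    by_cases hj : j = p
    · subst hj
      simp [subE, Function.update_self, eIdx_apply, hpq]
    · simp [subE, Function.update_of_ne hj, eIdx_apply, hj]
  have hidx2 : (⟨subE ((eIdx p).1 + (eIdx q).1) q, subE_ne (eIdx p).2 (eIdx q).2 q⟩ :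
      {m : Fin d → ℕ // m ≠ 0}) = eIdx p := by
    refine Subtype.ext (funext fun j => ?_)
    by_cases hj : j = q
    · subst hj
      simp [subE, Function.update_self, eIdx_apply, Ne.symm hpq]
    · simp [subE, Function.update_of_ne hj, eIdx_apply, hj]
  rw [hidx1, hidx2]
  have e1 : (eIdx q).1 p = 0 := by simp [eIdx_apply, hpq]
  have e2 : (eIdx p).1 p = 1 := by simp [eIdx_apply]
  have e3 : (eIdx q).1 q = 1 := by simp [eIdx_apply]
  have e4 : (eIdx p).1 q = 0 := by simp [eIdx_apply, Ne.symm hpq]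
  rw [e1, e2, e3, e4]
  push_cast
  rw [show γ p * ((0:ℂ) - 1) = -γ p by ring, show γ q * ((1:ℂ) - 0) = γ q by ring]
  rw [neg_smul]
  abel

/-- Every basis vector of degree `≥ 2` lies in the span of brackets. -/
lemma deg_two_mem {d : ℕ} (hd : 0 < d) {γ : Fin d → ℂ} (hγ0 : γ ⟨0, hd⟩ ≠ 0)
    {Lx : Type*} [LieRing Lx] [LieAlgebra ℂ Lx]
    {b : Module.Basis {m : Fin d → ℕ // m ≠ 0} ℂ Lx} (hb : LxRel γ b) :
    ∀ (r : ℕ) (m : {m : Fin d → ℕ // m ≠ 0}), 2 ≤ ∑ l, m.1 l →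
      (∑ l, m.1 l) - m.1 ⟨0, hd⟩ ≤ r →
      b m ∈ Submodule.span ℂ {v : Lx | ∃ x y : Lx, v = ⁅x, y⁆} := by
  intro r
  induction r using Nat.strong_induction_on with
  | _ r IH =>
  intro m hm hr
  set i₀ : Fin d := ⟨0, hd⟩ with hi₀
  set n : Fin d → ℕ := m.1 with hn
  set a : ℕ := if n i₀ = 1 then 2 else 1 with ha
  have ha2 : a ≤ 2 := by rw [ha]; split_ifs <;> omega
  have ha1 : 1 ≤ a := by rw [ha]; split_ifs <;> omega
  have hale : a ≤ n i₀ + 1 := by rw [ha]; split_ifs with h <;> omega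
  set p : Fin d → ℕ := fun j => if j = i₀ then a else 0 with hpdef
  set q : Fin d → ℕ := fun j => if j = i₀ then n i₀ + 1 - a else n j with hqdef
  have hpi0 : p i₀ = a := by simp [hpdef]
  have hqi0 : q i₀ = n i₀ + 1 - a := by simp [hqdef]
  have hplaw : ∀ j, j ≠ i₀ → p j = 0 := fun j hj => by simp [hpdef, hj]
  have hqlaw : ∀ j, j ≠ i₀ → q j = n j := fun j hj => by simp [hqdef, hj]
  have hpne : p ≠ 0 := by
    intro h
    have h2 := congrFun h i₀
    simp only [Pi.zero_apply] at h2
    omega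
  have hnsplit : n i₀ + ∑ l ∈ Finset.univ.erase i₀, n l = ∑ l, n l :=
    Finset.add_sum_erase _ _ (Finset.mem_univ i₀)
  have hqne : q ≠ 0 := by
    intro h
    have h1 := congrFun h i₀
    simp only [Pi.zero_apply] at h1
    have hz : ∑ l ∈ Finset.univ.erase i₀, n l = 0 := by
      refine Finset.sum_eq_zero fun j hj => ?_
      have hji := Finset.ne_of_mem_erase hj
      have h2 := congrFun h j
      simp only [Pi.zero_apply] at h2
      rw [hqlaw j hji] at h2
      exact h2
    omega
  have hsum : p + q = Function.update n i₀ (n i₀ + 1) := by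
    funext j
    by_cases h : j = i₀
    · subst h
      rw [Pi.add_apply, hpi0, hqi0, Function.update_self]
      omega
    · rw [Pi.add_apply, hplaw j h, hqlaw j h, Function.update_of_ne h, zero_add]
  have hpqi0 : (p + q) i₀ = n i₀ + 1 := by
    rw [Pi.add_apply, hpi0, hqi0]; omega
  have hsumpq : ∑ l, (p + q) l = (∑ l, n l) + 1 := by
    rw [hsum, Finset.sum_update_of_mem (Finset.mem_univ i₀), Finset.sdiff_singleton_eq_erase]
    omega
  have hv := hb ⟨p, hpne⟩ ⟨q, hqne⟩
  have hvmem : ⁅b ⟨p, hpne⟩, b ⟨q, hqne⟩⁆ ∈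
      Submodule.span ℂ {v : Lx | ∃ x y : Lx, v = ⁅x, y⁆} :=
    Submodule.subset_span ⟨_, _, rfl⟩
  have hidx : (⟨subE (p + q) i₀, subE_ne hpne hqne i₀⟩ : {m : Fin d → ℕ // m ≠ 0}) = m := by
    refine Subtype.ext (funext fun j => ?_)
    show subE (p + q) i₀ j = m.1 j
    rw [← hn]
    by_cases h : j = i₀
    · subst h
      simp only [subE, Function.update_self, hpqi0]
      omega
    · simp only [subE]; rw [Function.update_of_ne h, Pi.add_apply, hplaw j h, hqlaw j h, zero_add]
  have hterm : (γ i₀ * ((q i₀ : ℂ) - (p i₀ : ℂ))) • b m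
      = ⁅b ⟨p, hpne⟩, b ⟨q, hqne⟩⁆ -
        ∑ i ∈ Finset.univ.erase i₀,
          (γ i * ((q i : ℂ) - (p i : ℂ))) • b ⟨subE (p + q) i, subE_ne hpne hqne i⟩ := by
    rw [hv, ← Finset.add_sum_erase _ _ (Finset.mem_univ i₀), add_sub_cancel_right, hidx]
  have hmem : (γ i₀ * ((q i₀ : ℂ) - (p i₀ : ℂ))) • b m ∈
      Submodule.span ℂ {v : Lx | ∃ x y : Lx, v = ⁅x, y⁆} := by
    rw [hterm]
    refine Submodule.sub_mem _ hvmem (Submodule.sum_mem _ fun l hl => ?_)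
    have hli : l ≠ i₀ := Finset.ne_of_mem_erase hl
    by_cases hnl : n l = 0
    · rw [hqlaw l hli, hplaw l hli, hnl]
      simp
    · refine Submodule.smul_mem _ _ ?_
      have hpql : (p + q) l = n l := by
        rw [Pi.add_apply, hplaw l hli, hqlaw l hli, zero_add]
      have hs' : ∑ j, subE (p + q) l j = ∑ j, n j := by
        rw [sum_subE' _ _ (by omega : 1 ≤ (p + q) l), hsumpq]
        omega
      have hi' : subE (p + q) l i₀ = n i₀ + 1 := by
        simp only [subE]; rw [Function.update_of_ne (Ne.symm hli), hpqi0]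
      have hle : n l ≤ ∑ j ∈ Finset.univ.erase i₀, n j :=
        Finset.single_le_sum (fun _ _ => Nat.zero_le _)
          (Finset.mem_erase.mpr ⟨hli, Finset.mem_univ l⟩)
      exact IH ((∑ j, n j) - (n i₀ + 1)) (by omega)
        ⟨subE (p + q) l, subE_ne hpne hqne l⟩
        (by show 2 ≤ ∑ j, subE (p + q) l j; rw [hs']; exact hm)
        (by show (∑ j, subE (p + q) l j) - subE (p + q) l i₀ ≤ (∑ j, n j) - (n i₀ + 1)
            rw [hs', hi'])
  have hc : (γ i₀ * ((q i₀ : ℂ) - (p i₀ : ℂ))) ≠ 0 := by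
    rw [hqi0, hpi0]
    rcases eq_or_ne (n i₀) 1 with h | h
    · have haa : a = 2 := by rw [ha, if_pos h]
      rw [h, haa]
      norm_num
      exact hγ0
    · have haa : a = 1 := by rw [ha, if_neg h]
      rw [haa]
      have h1 : (n i₀ + 1 - 1) = n i₀ := by omega
      rw [h1]
      intro hcon
      rcases mul_eq_zero.mp hcon with h1 | h1
      · exact hγ0 h1
      · have h2 : (n i₀ : ℂ) = 1 := by
          have := sub_eq_zero.mp h1
          simpa using this
        exact h (by exact_mod_cast h2)
  have hfin := Submodule.smul_mem
    (Submodule.span ℂ {v : Lx | ∃ x y : Lx, v = ⁅x, y⁆})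
    (γ i₀ * ((q i₀ : ℂ) - (p i₀ : ℂ)))⁻¹ hmem
  rwa [smul_smul, inv_mul_cancel₀ hc, one_smul] at hfin

/-- Theorem 4.1(1), after Billig–Futorny.  The derived subalgebra of
`𝓛^x` decomposes as `[𝓛^x, 𝓛^x] = [𝓛^x_0, 𝓛^x_0] ⊕ (⊕_{j ≥ 1} 𝓛^x_j)`; explicitly,
`[𝓛^x, 𝓛^x]` is the (internal) direct sum of
`span{γ_j x_i d_γ - γ_i x_j d_γ : 1 ≤ i < j ≤ d}` and `span{x^m d_γ : |m| ≥ 2}`. -/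
theorem stmt3 (d : ℕ) (hd : 0 < d) (γ : Fin d → ℂ) (hγ : LinearIndependent ℚ γ)
    (Lx : Type*) [LieRing Lx] [LieAlgebra ℂ Lx]
    (b : Module.Basis {m : Fin d → ℕ // m ≠ 0} ℂ Lx) (hb : LxRel γ b) :
    Submodule.span ℂ {v : Lx | ∃ x y : Lx, v = ⁅x, y⁆}
      = Submodule.span ℂ
          {v : Lx | ∃ i j : Fin d, i < j ∧ v = γ j • b (eIdx i) - γ i • b (eIdx j)}
        ⊔ Submodule.span ℂ (⇑b '' {m : {m : Fin d → ℕ // m ≠ 0} | 2 ≤ ∑ l, m.1 l}) ∧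
    Submodule.span ℂ
        {v : Lx | ∃ i j : Fin d, i < j ∧ v = γ j • b (eIdx i) - γ i • b (eIdx j)}
      ⊓ Submodule.span ℂ (⇑b '' {m : {m : Fin d → ℕ // m ≠ 0} | 2 ≤ ∑ l, m.1 l}) = ⊥ := by
  have hγ0 : γ ⟨0, hd⟩ ≠ 0 := hγ.ne_zero ⟨0, hd⟩
  set S1 := Submodule.span ℂ
    {v : Lx | ∃ i j : Fin d, i < j ∧ v = γ j • b (eIdx i) - γ i • b (eIdx j)} with hS1
  set S2 := Submodule.span ℂ
    (⇑b '' {m : {m : Fin d → ℕ // m ≠ 0} | 2 ≤ ∑ l, m.1 l}) with hS2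
  constructor
  · -- equality of spans
    apply le_antisymm
    · -- brackets ⊆ S1 ⊔ S2
      have pair : ∀ m n' : {m : Fin d → ℕ // m ≠ 0}, ⁅b m, b n'⁆ ∈ S1 ⊔ S2 := by
        intro m n'
        by_cases h3 : 3 ≤ (∑ l, m.1 l) + ∑ l, n'.1 l
        · rw [hb]
          refine Submodule.sum_mem _ fun i _ => ?_
          by_cases hc : (γ i * ((n'.1 i : ℂ) - (m.1 i : ℂ))) = 0
          · rw [hc, zero_smul]; exact Submodule.zero_mem _
          · refine Submodule.smul_mem _ _ (Submodule.mem_sup_right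
              (Submodule.subset_span ⟨⟨subE (m.1 + n'.1) i, subE_ne m.2 n'.2 i⟩, ?_, rfl⟩))
            have hne : n'.1 i ≠ m.1 i := by
              intro h; exact hc (by rw [h]; ring)
            have h1 : 1 ≤ (m.1 + n'.1) i := by
              simp only [Pi.add_apply]; omega
            have h2 := sum_subE' (m.1 + n'.1) i h1
            have h4 : ∑ l, (m.1 + n'.1) l = (∑ l, m.1 l) + ∑ l, n'.1 l :=
              Finset.sum_add_distrib
            simp only [Set.mem_setOf_eq]
            omega
        · have h1 := one_le_sum' m
          have h2 := one_le_sum' n'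
          obtain ⟨pp, rfl⟩ := eq_eIdx' m (by omega)
          obtain ⟨qq, rfl⟩ := eq_eIdx' n' (by omega)
          rcases lt_trichotomy pp qq with h | h | h
          · rw [lie_single hb (ne_of_lt h)]
            exact Submodule.mem_sup_left (Submodule.subset_span ⟨pp, qq, h, rfl⟩)
          · subst h; rw [lie_self]; exact Submodule.zero_mem _
          · rw [lie_single hb (Ne.symm (ne_of_lt h)), ← neg_sub]
            exact Submodule.neg_mem _
              (Submodule.mem_sup_left (Submodule.subset_span ⟨qq, pp, h, rfl⟩))
      have key : ∀ x ∈ Submodule.span ℂ (Set.range ⇑b),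
          ∀ y ∈ Submodule.span ℂ (Set.range ⇑b), ⁅x, y⁆ ∈ S1 ⊔ S2 := by
        intro x hx
        induction hx using Submodule.span_induction with
        | mem x hxm =>
          intro y hy
          induction hy using Submodule.span_induction with
          | mem y hym =>
            obtain ⟨mm, rfl⟩ := hxm
            obtain ⟨nn, rfl⟩ := hym
            exact pair mm nn
          | zero => rw [lie_zero]; exact Submodule.zero_mem _
          | add y z _ _ h1 h2 => rw [lie_add]; exact Submodule.add_mem _ h1 h2
          | smul c y _ h => rw [lie_smul]; exact Submodule.smul_mem _ c h
        | zero => intro y hy; rw [zero_lie]; exact Submodule.zero_mem _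
        | add x z _ _ h1 h2 =>
          intro y hy; rw [add_lie]; exact Submodule.add_mem _ (h1 y hy) (h2 y hy)
        | smul c x _ h =>
          intro y hy; rw [smul_lie]; exact Submodule.smul_mem _ c (h y hy)
      rw [Submodule.span_le]
      rintro v ⟨x, y, rfl⟩
      exact key x (by rw [b.span_eq]; trivial) y (by rw [b.span_eq]; trivial)
    · refine sup_le ?_ ?_
      · rw [Submodule.span_le]
        rintro v ⟨i, j, hij, rfl⟩
        exact Submodule.subset_span ⟨b (eIdx i), b (eIdx j), (lie_single hb (ne_of_lt hij)).symm⟩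
      · rw [Submodule.span_le]
        rintro v ⟨mm, hmm, rfl⟩
        exact deg_two_mem hd hγ0 hb _ mm hmm le_rfl
  · -- disjointness
    have hle : S1 ≤ Submodule.span ℂ
        (⇑b '' {m : {m : Fin d → ℕ // m ≠ 0} | ∑ l, m.1 l = 1}) := by
      rw [hS1, Submodule.span_le]
      rintro v ⟨i, j, hij, rfl⟩
      have hei : ∀ k : Fin d, b (eIdx k) ∈ Submodule.span ℂ
          (⇑b '' {m : {m : Fin d → ℕ // m ≠ 0} | ∑ l, m.1 l = 1}) := by
        intro k
        refine Submodule.subset_span ⟨eIdx k, ?_, rfl⟩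
        simp only [Set.mem_setOf_eq, eIdx_apply]
        rw [Finset.sum_ite_eq' Finset.univ k fun _ => 1]
        simp
      exact Submodule.sub_mem _ (Submodule.smul_mem _ _ (hei i)) (Submodule.smul_mem _ _ (hei j))
    have hdisj : Disjoint
        {m : {m : Fin d → ℕ // m ≠ 0} | ∑ l, m.1 l = 1}
        {m : {m : Fin d → ℕ // m ≠ 0} | 2 ≤ ∑ l, m.1 l} := by
      rw [Set.disjoint_left]
      intro m h1 h2
      simp only [Set.mem_setOf_eq] at h1 h2
      omega
    have := (b.linearIndependent.disjoint_span_image hdisj).mono_left hle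
    exact disjoint_iff.mp this
end
end

section
/- For every finite-dimensional representation (U, ρ) of the Lie algebra 𝓛^x there exists an integer P such that ρ(𝓛^x_p) = 0 for all p ≥ P. -/
open scoped BigOperators

noncomputable section

attribute [local instance 100] LieRing.ofAssociativeRing

lemma subE_eIdx_add_self {d : ℕ} (n : Fin d → ℕ) (i : Fin d) :
    subE ((eIdx i).1 + n) i = n := by
  funext j
  by_cases hj : j = i
  · subst hj; simp [subE, eIdx]
  · simp [subE, eIdx, Function.update_of_ne hj, hj]

lemma sum_subE_add_one {d : ℕ} (v : Fin d → ℕ) (k : Fin d) (h : 1 ≤ v k) :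
    (∑ l, subE v k l) + 1 = ∑ l, v l := by
  have h1 : ∀ l, subE v k l + (if l = k then 1 else 0) = v l := by
    intro l
    by_cases hl : l = k
    · subst hl; simp [subE]; omega
    · simp [subE, Function.update_of_ne hl, hl]
  have h2 : ∑ l, v l = ∑ l, (subE v k l + if l = k then 1 else 0) :=
    Finset.sum_congr rfl fun l _ => (h1 l).symm
  rw [h2, Finset.sum_add_distrib]
  simp

lemma kill {d : ℕ} (γ : Fin d → ℂ) {Lx : Type*} [LieRing Lx] [LieAlgebra ℂ Lx]
    (b : Module.Basis {m : Fin d → ℕ // m ≠ 0} ℂ Lx) (hb : LxRel γ b)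
    {U : Type*} [AddCommGroup U] [Module ℂ U]
    (ρ : Lx →ₗ⁅ℂ⁆ Module.End ℂ U) (i : Fin d) (r : ℕ) :
    ∀ n : {m : Fin d → ℕ // m ≠ 0}, (∑ l, n.1 l) = n.1 i + r →
      (∀ s : ℕ, n.1 i ≤ s →
        ¬ Module.End.HasEigenvalue
          (LieAlgebra.ad ℂ (Module.End ℂ U) (ρ (b (eIdx i)))) (γ i * ((s : ℂ) - 1))) →
      ρ (b n) = 0 := by
  induction r using Nat.strong_induction_on with
  | _ r ih =>
  intro n hsum heig
  set B := LieAlgebra.ad ℂ (Module.End ℂ U) (ρ (b (eIdx i))) with hB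
  have expand : ρ ⁅b (eIdx i), b n⁆ =
      ∑ k, (γ k * ((n.1 k : ℂ) - (((eIdx i).1 k : ℕ) : ℂ))) •
        ρ (b ⟨subE ((eIdx i).1 + n.1) k, subE_ne (eIdx i).2 n.2 k⟩) := by
    rw [hb (eIdx i) n, ← LieHom.coe_toLinearMap, map_sum]
    simp only [map_smul, LieHom.coe_toLinearMap]
  have hzero : ∀ k ∈ Finset.univ, k ≠ i →
      (γ k * ((n.1 k : ℂ) - (((eIdx i).1 k : ℕ) : ℂ))) •
        ρ (b ⟨subE ((eIdx i).1 + n.1) k, subE_ne (eIdx i).2 n.2 k⟩) = 0 := by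
    intro k _ hk
    by_cases hnk : n.1 k = 0
    · have h0 : (((eIdx i).1 k : ℕ) : ℂ) = 0 := by simp [eIdx, hk]
      rw [hnk, h0]
      simp
    · have hr1 : 1 ≤ r := by
        have hle : n.1 i + n.1 k ≤ ∑ l, n.1 l := by
          have hsub := Finset.sum_le_sum_of_subset
            (Finset.subset_univ ({i, k} : Finset (Fin d))) (f := n.1)
          rwa [Finset.sum_pair (Ne.symm hk)] at hsub
        omega
      set n' : {m : Fin d → ℕ // m ≠ 0} :=
        ⟨subE ((eIdx i).1 + n.1) k, subE_ne (eIdx i).2 n.2 k⟩ with hn'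
      have hvk : 1 ≤ ((eIdx i).1 + n.1) k := by
        simp only [Pi.add_apply]; omega
      have h3 : n'.1 i = n.1 i + 1 := by
        show subE ((eIdx i).1 + n.1) k i = n.1 i + 1
        rw [subE, Function.update_of_ne (Ne.symm hk)]
        simp [eIdx]
        omega
      have hsum' : ∑ l, n'.1 l = n'.1 i + (r - 1) := by
        have h1 : (∑ l, n'.1 l) + 1 = ∑ l, ((eIdx i).1 + n.1) l :=
          sum_subE_add_one _ _ hvk
        have h2 : ∑ l, ((eIdx i).1 + n.1) l = 1 + ∑ l, n.1 l := by
          simp only [Pi.add_apply]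
          rw [Finset.sum_add_distrib]
          have : ∑ l, (eIdx i).1 l = 1 := by simp [eIdx]
          omega
        omega
      have hz : ρ (b n') = 0 :=
        ih (r - 1) (by omega) n' hsum' (fun s hs => heig s (by omega))
      rw [hz, smul_zero]
  have key : ρ ⁅b (eIdx i), b n⁆ = (γ i * ((n.1 i : ℂ) - 1)) • ρ (b n) := by
    rw [expand, Finset.sum_eq_single_of_mem i (Finset.mem_univ i) hzero]
    have e1 : (((eIdx i).1 i : ℕ) : ℂ) = 1 := by simp [eIdx]
    have e2 : (⟨subE ((eIdx i).1 + n.1) i, subE_ne (eIdx i).2 n.2 i⟩ :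
        {m : Fin d → ℕ // m ≠ 0}) = n := Subtype.ext (subE_eIdx_add_self n.1 i)
    rw [e1, e2]
  by_contra hne
  have hlie : B (ρ (b n)) = (γ i * ((n.1 i : ℂ) - 1)) • ρ (b n) := by
    rw [hB, LieAlgebra.ad_apply, ← LieHom.map_lie, key]
  exact heig (n.1 i) le_rfl
    (Module.End.hasEigenvalue_of_hasEigenvector
      ⟨Module.End.mem_eigenspace_iff.2 hlie, hne⟩)

/-- Theorem 4.1(2).  Every finite-dimensional representation `(U, ρ)` of
the Lie algebra `𝓛^x` satisfies `ρ(𝓛^x_p) = 0` for all sufficiently large `p`; recall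
`𝓛^x_p = span{x^m d_γ : |m| = p + 1}`. -/
theorem stmt4 (d : ℕ) (hd : 0 < d) (γ : Fin d → ℂ) (hγ : LinearIndependent ℚ γ)
    (Lx : Type*) [LieRing Lx] [LieAlgebra ℂ Lx]
    (b : Module.Basis {m : Fin d → ℕ // m ≠ 0} ℂ Lx) (hb : LxRel γ b)
    (U : Type*) [AddCommGroup U] [Module ℂ U] [FiniteDimensional ℂ U]
    (ρ : Lx →ₗ⁅ℂ⁆ Module.End ℂ U) :
    ∃ P : ℕ, ∀ p : ℕ, P ≤ p →
      ∀ m : {m : Fin d → ℕ // m ≠ 0}, (∑ l, m.1 l) = p + 1 → ρ (b m) = 0 := by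
  classical
  have hγ0 : ∀ i, γ i ≠ 0 := fun i => hγ.ne_zero i
  have key : ∀ i : Fin d, ∃ N : ℕ, ∀ s : ℕ, N ≤ s →
      ¬ Module.End.HasEigenvalue
        (LieAlgebra.ad ℂ (Module.End ℂ U) (ρ (b (eIdx i)))) (γ i * ((s : ℂ) - 1)) := by
    intro i
    set B := LieAlgebra.ad ℂ (Module.End ℂ U) (ρ (b (eIdx i))) with hB
    have hfin : (setOf B.HasEigenvalue).Finite := Module.End.finite_hasEigenvalue B
    have hinj : Function.Injective (fun s : ℕ => γ i * ((s : ℂ) - 1)) := by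
      intro s t hst
      simp only at hst
      have := mul_left_cancel₀ (hγ0 i) hst
      have : (s : ℂ) = (t : ℂ) := by linear_combination this
      exact_mod_cast this
    have hpre : {s : ℕ | B.HasEigenvalue (γ i * ((s : ℂ) - 1))}.Finite := by
      have : {s : ℕ | B.HasEigenvalue (γ i * ((s : ℂ) - 1))} =
          (fun s : ℕ => γ i * ((s : ℂ) - 1)) ⁻¹' (setOf B.HasEigenvalue) := rfl
      rw [this]
      exact Set.Finite.preimage (hinj.injOn) hfin
    obtain ⟨N, hN⟩ := hpre.bddAbove
    refine ⟨N + 1, fun s hs hbad => ?_⟩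
    have := hN hbad
    omega
  choose N hN using key
  refine ⟨d * Finset.univ.sup N, fun p hp n hsumn => ?_⟩
  have hex : ∃ i, Finset.univ.sup N < n.1 i := by
    by_contra hc
    push_neg at hc
    have hle : ∑ l, n.1 l ≤ ∑ _l : Fin d, Finset.univ.sup N :=
      Finset.sum_le_sum fun l _ => hc l
    rw [Finset.sum_const, Finset.card_univ, Fintype.card_fin, smul_eq_mul] at hle
    omega
  obtain ⟨i, hi⟩ := hex
  have hNi : N i ≤ n.1 i := le_trans (Finset.le_sup (Finset.mem_univ i)) (le_of_lt hi)
  have hile : n.1 i ≤ ∑ l, n.1 l :=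
    Finset.single_le_sum (fun _ _ => Nat.zero_le _) (Finset.mem_univ i)
  exact kill γ b hb ρ i ((∑ l, n.1 l) - n.1 i) n (by omega)
    (fun s hs => hN i s (le_trans hNi hs))
end
end
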